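/- arXiv:0803.0676 — 8 statements merged into one kernel-verified Lean document; each statement's English description precedes it below -/
import Mathlib

section
/- Let R be a real closed field with natural valuation v and value group Γ. Let (A₁,B₁) and (A₂,B₂) be proper cuts of R (all four sets nonempty) with A₁ ⊆ A₂, and let P₁, P₂ be the corresponding orderings of the rational function field R(X). Let Sᵢ = {v(b−a) : a ∈ Aᵢ, b ∈ Bᵢ} ⊆ Γ for i = 1,2. If S₁ ≠ S₂, then the associated ℝ-places differ: λ_{P₁} ≠ λ_{P₂} as functions R(X) → ℝ ∪ {∞}. -/
attribute [local instance] Classical.propDecidable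

/-- An ordering of a field `K`: `P + P ⊆ P`, `P·P ⊆ P`, `P ∪ (−P) = K`, `P ∩ (−P) = {0}`. -/
def IsOrdering {K : Type*} [Field K] (P : Set K) : Prop :=
  (∀ x ∈ P, ∀ y ∈ P, x + y ∈ P) ∧ (∀ x ∈ P, ∀ y ∈ P, x * y ∈ P) ∧
    (∀ x : K, x ∈ P ∨ -x ∈ P) ∧ (∀ x : K, x ∈ P → -x ∈ P → x = 0)

/-- The valuation ring `A(P) = {x : ∃ q ∈ ℚ, q > 0, q − x ∈ P and q + x ∈ P}` of an ordering. -/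
def orderValRing {K : Type*} [Field K] (P : Set K) : Set K :=
  {x : K | ∃ q : ℚ, 0 < q ∧ (q : K) - x ∈ P ∧ (q : K) + x ∈ P}

/-- The ℝ-place `λ_P : K → ℝ ∪ {∞}` associated to an ordering `P`:
`λ_P(x) = sup {q ∈ ℚ : x − q ∈ P}` for `x ∈ A(P)` and `∞` otherwise. -/
noncomputable def rPlace {K : Type*} [Field K] (P : Set K) (x : K) : WithTop ℝ :=
  if x ∈ orderValRing P then
    ((sSup {r : ℝ | ∃ q : ℚ, r = (q : ℝ) ∧ x - (q : K) ∈ P} : ℝ) : WithTop ℝ)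
  else ⊤

/-- The ordering of the rational function field `R(X)` determined by a proper cut `(A,B)` of `R`:
a nonzero `f` is in the ordering iff there are `a ∈ A`, `b ∈ B` such that `f` is defined with
positive values throughout `(a,b)`. -/
def cutOrdering {R : Type*} [Field R] [LinearOrder R] [IsStrictOrderedRing R] (A B : Set R) : Set (RatFunc R) :=
  {f : RatFunc R | f = 0 ∨ ∃ a ∈ A, ∃ b ∈ B, ∀ c : R, a < c → c < b →
    Polynomial.eval c f.denom ≠ 0 ∧ 0 < RatFunc.eval (RingHom.id R) c f}

section Helpers

variable {R : Type*} [Field R] [LinearOrder R] [IsStrictOrderedRing R]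

lemma myEval (p : Polynomial R) (c : R) :
    RatFunc.eval (RingHom.id R) c (algebraMap (Polynomial R) (RatFunc R) p) = p.eval c := by
  rw [RatFunc.eval_algebraMap]; rfl

lemma myRatCast (q : ℚ) :
    ((q : ℚ) : RatFunc R) = algebraMap (Polynomial R) (RatFunc R) (Polynomial.C (q : R)) := by
  rw [← map_ratCast (algebraMap R (RatFunc R)) q,
     IsScalarTower.algebraMap_apply R (Polynomial R) (RatFunc R), Polynomial.algebraMap_eq]

/-- the function `(X - a)/d` as a rational function -/
noncomputable def linFrac (a d : R) : RatFunc R :=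
  algebraMap (Polynomial R) (RatFunc R) (Polynomial.C d⁻¹ * (Polynomial.X - Polynomial.C a))

lemma mem_cut_poly {A B : Set R} (p : Polynomial R) {a b : R} (ha : a ∈ A) (hb : b ∈ B)
    (h : ∀ c : R, a < c → c < b → 0 < p.eval c) :
    algebraMap (Polynomial R) (RatFunc R) p ∈ cutOrdering A B := by
  refine Or.inr ⟨a, ha, b, hb, fun c h1 h2 => ?_⟩
  rw [RatFunc.denom_algebraMap, myEval]
  exact ⟨by simp, h c h1 h2⟩

lemma cut_pos_interval {A B : Set R} {p : Polynomial R}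
    (h : algebraMap (Polynomial R) (RatFunc R) p ∈ cutOrdering A B) (hp : p ≠ 0) :
    ∃ a ∈ A, ∃ b ∈ B, ∀ c : R, a < c → c < b → 0 < p.eval c := by
  rcases h with h | ⟨a, ha, b, hb, h⟩
  · exact absurd (RatFunc.algebraMap_injective R (by simpa using h)) hp
  · exact ⟨a, ha, b, hb, fun c h1 h2 => by
      have := (h c h1 h2).2
      rwa [myEval] at this⟩

lemma not_mem_valring {A B : Set R} (hlt : ∀ a ∈ A, ∀ b ∈ B, a < b)
    (a d : R) (hd : 0 < d)
    (hsmall : ∀ a' ∈ A, ∀ b' ∈ B, ∀ n : ℕ, (n : R) * d < b' - a') :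
    linFrac a d ∉ orderValRing (cutOrdering A B) := by
  rintro ⟨q, hq, h1, h2⟩
  have hdne : d ≠ 0 := ne_of_gt hd
  have hqR : (0 : R) < (q : ℚ) := by exact_mod_cast hq
  set p1 : Polynomial R :=
    Polynomial.C (q : R) - Polynomial.C d⁻¹ * (Polynomial.X - Polynomial.C a) with hp1
  set p2 : Polynomial R :=
    Polynomial.C (q : R) + Polynomial.C d⁻¹ * (Polynomial.X - Polynomial.C a) with hp2
  have e1 : ((q : ℚ) : RatFunc R) - linFrac a d = algebraMap (Polynomial R) (RatFunc R) p1 := by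
    rw [myRatCast, linFrac, hp1, map_sub]
  have e2 : ((q : ℚ) : RatFunc R) + linFrac a d = algebraMap (Polynomial R) (RatFunc R) p2 := by
    rw [myRatCast, linFrac, hp2, map_add]
  have hev1 : ∀ c : R, p1.eval c = (q : R) - d⁻¹ * (c - a) := by intro c; simp [hp1]
  have hev2 : ∀ c : R, p2.eval c = (q : R) + d⁻¹ * (c - a) := by intro c; simp [hp2]
  have hp1ne : p1 ≠ 0 := by
    intro h0
    have h := hev1 a
    rw [h0, Polynomial.eval_zero, sub_self, mul_zero, sub_zero] at h
    exact (ne_of_gt hqR) h.symm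
  have hp2ne : p2 ≠ 0 := by
    intro h0
    have h := hev2 a
    rw [h0, Polynomial.eval_zero, sub_self, mul_zero, add_zero] at h
    exact (ne_of_gt hqR) h.symm
  rw [e1] at h1
  rw [e2] at h2
  obtain ⟨a₁, ha₁, b₁, hb₁, H1⟩ := cut_pos_interval h1 hp1ne
  obtain ⟨a₂, ha₂, b₂, hb₂, H2⟩ := cut_pos_interval h2 hp2ne
  -- claim 1 : b₁ ≤ a + q*d
  have hcl1 : b₁ ≤ a + (q : R) * d := by
    by_contra hcon
    push_neg at hcon
    set c := (max a₁ (a + (q : R) * d) + b₁) / 2 with hc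
    have hm : max a₁ (a + (q : R) * d) < b₁ := max_lt (hlt a₁ ha₁ b₁ hb₁) hcon
    have hc1 : a₁ < c := by
      have := le_max_left a₁ (a + (q : R) * d); rw [hc]; linarith
    have hc2 : c < b₁ := by rw [hc]; linarith
    have hc3 : a + (q : R) * d < c := by
      have := le_max_right a₁ (a + (q : R) * d); rw [hc]; linarith
    have hpos := H1 c hc1 hc2
    rw [hev1] at hpos
    have h' : (c - a) / d < (q : R) := by rw [← inv_mul_eq_div]; linarith
    have := (div_lt_iff₀ hd).mp h'
    linarith
  -- claim 2 : a - q*d ≤ a₂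
  have hcl2 : a - (q : R) * d ≤ a₂ := by
    by_contra hcon
    push_neg at hcon
    set c := (a₂ + min b₂ (a - (q : R) * d)) / 2 with hc
    have hm : a₂ < min b₂ (a - (q : R) * d) := lt_min (hlt a₂ ha₂ b₂ hb₂) hcon
    have hc1 : a₂ < c := by rw [hc]; linarith
    have hc2 : c < b₂ := by
      have := min_le_left b₂ (a - (q : R) * d); rw [hc]; linarith
    have hc3 : c < a - (q : R) * d := by
      have := min_le_right b₂ (a - (q : R) * d); rw [hc]; linarith
    have hpos := H2 c hc1 hc2
    rw [hev2] at hpos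
    have h' : -(q : R) < (c - a) / d := by rw [← inv_mul_eq_div]; linarith
    have := (lt_div_iff₀ hd).mp h'
    linarith
  -- contradiction with hsmall
  have hwidth := hsmall a₂ ha₂ b₁ hb₁ ⌈2 * q⌉₊
  have hle : (2 * q : ℚ) ≤ (⌈2 * q⌉₊ : ℚ) := Nat.le_ceil _
  have hcast : 2 * (q : R) ≤ ((⌈2 * q⌉₊ : ℕ) : R) := by exact_mod_cast hle
  nlinarith [mul_le_mul_of_nonneg_right hcast hd.le]

lemma mem_valring {A B : Set R} (hcut : A ∪ B = Set.univ) (hlt : ∀ a ∈ A, ∀ b ∈ B, a < b)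
    {a b : R} (ha : a ∈ A) (hb : b ∈ B) :
    linFrac a (b - a) ∈ orderValRing (cutOrdering A B) := by
  set d := b - a with hdd
  have hd : 0 < d := sub_pos.mpr (hlt a ha b hb)
  have hdne : d ≠ 0 := ne_of_gt hd
  refine ⟨2, by norm_num, ?_, ?_⟩
  · -- 2 - f positive on (a, b+d)
    have hbd : b + d ∈ B := by
      have : b + d ∉ A := fun hmem => absurd (hlt _ hmem b hb) (by linarith)
      have := hcut ▸ Set.mem_univ (b + d)
      rcases (hcut.symm ▸ Set.mem_univ (b + d) : b + d ∈ A ∪ B) with h | h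
      · exact absurd h ‹b + d ∉ A›
      · exact h
    have : ((2 : ℚ) : RatFunc R) - linFrac a d = algebraMap (Polynomial R) (RatFunc R)
        (Polynomial.C ((2 : ℚ) : R) - Polynomial.C d⁻¹ * (Polynomial.X - Polynomial.C a)) := by
      rw [myRatCast, linFrac, map_sub]
    rw [this]
    refine mem_cut_poly _ ha hbd fun c h1 h2 => ?_
    have hev : (Polynomial.C ((2 : ℚ) : R) - Polynomial.C d⁻¹ *
        (Polynomial.X - Polynomial.C a)).eval c = ((2 : ℚ) : R) - d⁻¹ * (c - a) := by simp
    rw [hev]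
    have h2' : c - a < 2 * d := by push_cast at h2 ⊢; linarith
    have : d⁻¹ * (c - a) < 2 := by
      rw [inv_mul_eq_div, div_lt_iff₀ hd]; linarith
    push_cast
    linarith
  · -- 2 + f positive on (a - 2d, b)
    have had : a - 2 * d ∈ A := by
      have hnB : a - 2 * d ∉ B := fun hmem => absurd (hlt a ha _ hmem) (by linarith)
      rcases (hcut.symm ▸ Set.mem_univ (a - 2 * d) : a - 2 * d ∈ A ∪ B) with h | h
      · exact h
      · exact absurd h hnB
    have : ((2 : ℚ) : RatFunc R) + linFrac a d = algebraMap (Polynomial R) (RatFunc R)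
        (Polynomial.C ((2 : ℚ) : R) + Polynomial.C d⁻¹ * (Polynomial.X - Polynomial.C a)) := by
      rw [myRatCast, linFrac, map_add]
    rw [this]
    refine mem_cut_poly _ had hb fun c h1 h2 => ?_
    have hev : (Polynomial.C ((2 : ℚ) : R) + Polynomial.C d⁻¹ *
        (Polynomial.X - Polynomial.C a)).eval c = ((2 : ℚ) : R) + d⁻¹ * (c - a) := by simp
    rw [hev]
    have h1' : -(2 * d) < c - a := by linarith
    have : -2 < d⁻¹ * (c - a) := by
      rw [inv_mul_eq_div, lt_div_iff₀ hd]; linarith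
    push_cast
    linarith

end Helpers

/-- if the lower cuts `S₁ ≠ S₂` then the ℝ-places of the orderings of `R(X)`
corresponding to the cuts `(A₁,B₁)` and `(A₂,B₂)` differ. -/
theorem places_differ_of_S_ne {R Γ : Type*} [Field R] [LinearOrder R] [IsStrictOrderedRing R] [AddCommGroup Γ] [LinearOrder Γ] [IsOrderedAddMonoid Γ]
    -- R is real closed:
    (hsq : ∀ a : R, 0 ≤ a → ∃ b : R, b * b = a)
    (hodd : ∀ p : Polynomial R, Odd p.natDegree → ∃ x : R, p.eval x = 0)
    -- v is the natural valuation of R with value group Γ: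
    (v : R → Γ)
    (hv_surj : ∀ γ : Γ, ∃ a : R, a ≠ 0 ∧ v a = γ)
    (hv_mul : ∀ a b : R, a ≠ 0 → b ≠ 0 → v (a * b) = v a + v b)
    (hv_le : ∀ a b : R, a ≠ 0 → b ≠ 0 → (v b ≤ v a ↔ ∃ n : ℕ, |a| ≤ (n : R) * |b|))
    -- (A₁,B₁) and (A₂,B₂) are proper cuts of R:
    (A₁ B₁ A₂ B₂ : Set R)
    (hcut₁ : A₁ ∪ B₁ = Set.univ) (hdisj₁ : A₁ ∩ B₁ = ∅)
    (hlt₁ : ∀ a ∈ A₁, ∀ b ∈ B₁, a < b)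
    (hcut₂ : A₂ ∪ B₂ = Set.univ) (hdisj₂ : A₂ ∩ B₂ = ∅)
    (hlt₂ : ∀ a ∈ A₂, ∀ b ∈ B₂, a < b)
    (hA₁ : A₁.Nonempty) (hB₁ : B₁.Nonempty) (hA₂ : A₂.Nonempty) (hB₂ : B₂.Nonempty)
    (hsub : A₁ ⊆ A₂)
    (S₁ S₂ : Set Γ)
    (hS₁ : S₁ = {γ : Γ | ∃ a ∈ A₁, ∃ b ∈ B₁, γ = v (b - a)})
    (hS₂ : S₂ = {γ : Γ | ∃ a ∈ A₂, ∃ b ∈ B₂, γ = v (b - a)})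
    (hne : S₁ ≠ S₂) :
    rPlace (cutOrdering A₁ B₁) ≠ rPlace (cutOrdering A₂ B₂) := by
  classical
  -- v of a positive natural is 0
  have hv1 : v 1 = 0 := by
    have h := hv_mul 1 1 one_ne_zero one_ne_zero
    rw [mul_one] at h
    exact left_eq_add.mp h
  have hvnat : ∀ n : ℕ, 1 ≤ n → v ((n : ℕ) : R) = 0 := by
    intro n hn
    have hnR : (0 : R) < (n : R) := by exact_mod_cast hn
    have hnne : ((n : ℕ) : R) ≠ 0 := ne_of_gt hnR
    have h1 : v ((n : ℕ) : R) ≤ v 1 := by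
      rw [hv_le 1 ((n : ℕ) : R) one_ne_zero hnne]
      exact ⟨1, by simp [abs_of_pos hnR]; exact_mod_cast hn⟩
    have h2 : v 1 ≤ v ((n : ℕ) : R) := by
      rw [hv_le ((n : ℕ) : R) 1 hnne one_ne_zero]
      exact ⟨n, by simp [abs_of_pos hnR]⟩
    rw [hv1] at h1 h2
    exact le_antisymm h1 h2
  -- smallness from non-membership of the value
  have key : ∀ (A B : Set R), (A ∪ B = Set.univ) → (∀ a ∈ A, ∀ b ∈ B, a < b) →
      ∀ d : R, 0 < d → v d ∉ {γ : Γ | ∃ a ∈ A, ∃ b ∈ B, γ = v (b - a)} →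
      ∀ a' ∈ A, ∀ b' ∈ B, ∀ n : ℕ, (n : R) * d < b' - a' := by
    intro A B hcut hlt d hd hnotin a' ha' b' hb' n
    by_contra hcon
    push_neg at hcon
    have hw : 0 < b' - a' := sub_pos.mpr (hlt a' ha' b' hb')
    have hn1 : 1 ≤ n := by
      rcases Nat.eq_zero_or_pos n with h | h
      · exfalso; rw [h] at hcon; simp at hcon; linarith
      · exact h
    have hb'' : a' + (n : R) * d ∈ B := by
      have hge : b' ≤ a' + (n : R) * d := by linarith
      have hnA : a' + (n : R) * d ∉ A := fun hmem =>
        absurd (hlt _ hmem b' hb') (by linarith)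
      rcases (hcut.symm ▸ Set.mem_univ (a' + (n : R) * d) : a' + (n : R) * d ∈ A ∪ B) with h | h
      · exact absurd h hnA
      · exact h
    apply hnotin
    refine ⟨a', ha', a' + (n : R) * d, hb'', ?_⟩
    have : a' + (n : R) * d - a' = (n : R) * d := by ring
    rw [this]
    have hnne : ((n : ℕ) : R) ≠ 0 := by
      have : (0:R) < (n:R) := by exact_mod_cast hn1
      exact ne_of_gt this
    rw [hv_mul _ _ hnne (ne_of_gt hd), hvnat n hn1, zero_add]
  -- get a value in the symmetric difference
  have hdiff : (∃ γ, γ ∈ S₁ ∧ γ ∉ S₂) ∨ (∃ γ, γ ∈ S₂ ∧ γ ∉ S₁) := by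
    by_contra h
    push_neg at h
    exact hne (Set.Subset.antisymm (fun γ hg => h.1 γ hg) (fun γ hg => h.2 γ hg))
  rcases hdiff with ⟨γ, hγ1, hγ2⟩ | ⟨γ, hγ2, hγ1⟩
  · -- γ = v(b-a), a ∈ A₁, b ∈ B₁, small for cut 2
    rw [hS₁] at hγ1
    obtain ⟨a, ha, b, hb, hγ⟩ := hγ1
    have hd : 0 < b - a := sub_pos.mpr (hlt₁ a ha b hb)
    have hnotin : v (b - a) ∉ {γ : Γ | ∃ a ∈ A₂, ∃ b ∈ B₂, γ = v (b - a)} := by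
      rw [hS₂] at hγ2; rw [← hγ]; exact hγ2
    have hsmall := key A₂ B₂ hcut₂ hlt₂ (b - a) hd hnotin
    have hmem : linFrac a (b - a) ∈ orderValRing (cutOrdering A₁ B₁) :=
      mem_valring hcut₁ hlt₁ ha hb
    have hnmem : linFrac a (b - a) ∉ orderValRing (cutOrdering A₂ B₂) :=
      not_mem_valring hlt₂ a (b - a) hd hsmall
    intro hEq
    have := congrFun hEq (linFrac a (b - a))
    rw [rPlace, rPlace, if_pos hmem, if_neg hnmem] at this
    exact WithTop.coe_ne_top this
  · rw [hS₂] at hγ2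
    obtain ⟨a, ha, b, hb, hγ⟩ := hγ2
    have hd : 0 < b - a := sub_pos.mpr (hlt₂ a ha b hb)
    have hnotin : v (b - a) ∉ {γ : Γ | ∃ a ∈ A₁, ∃ b ∈ B₁, γ = v (b - a)} := by
      rw [hS₁] at hγ1; rw [← hγ]; exact hγ1
    have hsmall := key A₁ B₁ hcut₁ hlt₁ (b - a) hd hnotin
    have hmem : linFrac a (b - a) ∈ orderValRing (cutOrdering A₂ B₂) :=
      mem_valring hcut₂ hlt₂ ha hb
    have hnmem : linFrac a (b - a) ∉ orderValRing (cutOrdering A₁ B₁) :=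
      not_mem_valring hlt₁ a (b - a) hd hsmall
    intro hEq
    have := congrFun hEq (linFrac a (b - a))
    rw [rPlace, rPlace, if_neg hnmem, if_pos hmem] at this
    exact WithTop.coe_ne_top this.symm
end

section
/- Let R be a real closed field with natural valuation v, value group Γ, and ring of finite elements O = {a ∈ R : |a| ≤ n for some n ∈ ℕ}. Let (A₁,B₁) and (A₂,B₂) be proper cuts of R with A₁ ⊊ A₂, and let Sᵢ = {v(b−a) : a ∈ Aᵢ, b ∈ Bᵢ}. If S₁ ⊊ S₂, then there exists a polynomial f ∈ R[X] of degree 1, elements a₂ ∈ A₂, b₂ ∈ B₂ and a₁ ∈ A₁, b₁ ∈ B₁, such that for every c with a₂ < c < b₂ one has f(c) > 0 and f(c) is a unit of O (i.e. both f(c) and f(c)⁻¹ lie in O), while for every c with a₁ < c < b₁ one has f(c) < 0. -/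
/-- if `S₁ ⊊ S₂`, there is a degree-one polynomial which is positive with values
that are units of the ring of finite elements `O` on a neighbourhood of the cut `(A₂,B₂)`,
and negative on a neighbourhood of the cut `(A₁,B₁)`. -/
theorem separating_linear_poly_of_S_ssub {R Γ : Type*} [Field R] [LinearOrder R] [IsStrictOrderedRing R]
    [AddCommGroup Γ] [LinearOrder Γ] [IsOrderedAddMonoid Γ]
    -- R is real closed:
    (hsq : ∀ a : R, 0 ≤ a → ∃ b : R, b * b = a)
    (hodd : ∀ p : Polynomial R, Odd p.natDegree → ∃ x : R, p.eval x = 0)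
    -- v is the natural valuation of R with value group Γ:
    (v : R → Γ)
    (hv_surj : ∀ γ : Γ, ∃ a : R, a ≠ 0 ∧ v a = γ)
    (hv_mul : ∀ a b : R, a ≠ 0 → b ≠ 0 → v (a * b) = v a + v b)
    (hv_le : ∀ a b : R, a ≠ 0 → b ≠ 0 → (v b ≤ v a ↔ ∃ n : ℕ, |a| ≤ (n : R) * |b|))
    -- the ring of finite elements:
    (O : Set R) (hO : O = {a : R | ∃ n : ℕ, |a| ≤ (n : R)})
    -- (A₁,B₁) and (A₂,B₂) are proper cuts of R:
    (A₁ B₁ A₂ B₂ : Set R)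
    (hcut₁ : A₁ ∪ B₁ = Set.univ) (hdisj₁ : A₁ ∩ B₁ = ∅)
    (hlt₁ : ∀ a ∈ A₁, ∀ b ∈ B₁, a < b)
    (hcut₂ : A₂ ∪ B₂ = Set.univ) (hdisj₂ : A₂ ∩ B₂ = ∅)
    (hlt₂ : ∀ a ∈ A₂, ∀ b ∈ B₂, a < b)
    (hA₁ : A₁.Nonempty) (hB₁ : B₁.Nonempty) (hA₂ : A₂.Nonempty) (hB₂ : B₂.Nonempty)
    (hsub : A₁ ⊂ A₂)
    (S₁ S₂ : Set Γ)
    (hS₁ : S₁ = {γ : Γ | ∃ a ∈ A₁, ∃ b ∈ B₁, γ = v (b - a)})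
    (hS₂ : S₂ = {γ : Γ | ∃ a ∈ A₂, ∃ b ∈ B₂, γ = v (b - a)})
    (hS : S₁ ⊂ S₂) :
    ∃ f : Polynomial R, f.degree = 1 ∧
      ∃ a₂ ∈ A₂, ∃ b₂ ∈ B₂, ∃ a₁ ∈ A₁, ∃ b₁ ∈ B₁,
        (∀ c : R, a₂ < c → c < b₂ →
          0 < f.eval c ∧ f.eval c ∈ O ∧ (f.eval c)⁻¹ ∈ O) ∧
        (∀ c : R, a₁ < c → c < b₁ → f.eval c < 0) := by

  classical
  -- pick γ ∈ S₂ \ S₁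
  obtain ⟨γ, hγS₂, hγS₁⟩ := Set.not_subset.mp hS.2
  obtain ⟨d, hdA₂, hdA₁⟩ := Set.not_subset.mp hsub.2
  rw [hS₂] at hγS₂
  obtain ⟨a, haA₂, b, hbB₂, hγ⟩ := hγS₂
  obtain ⟨x₀, hx₀ne, hx₀v⟩ := hv_surj γ
  set x : R := |x₀| with hx
  have hxpos : 0 < x := abs_pos.mpr hx₀ne
  have hveq : ∀ y z : R, y ≠ 0 → z ≠ 0 → (∃ n : ℕ, |y| ≤ (n : R) * |z|) →
      (∃ m : ℕ, |z| ≤ (m : R) * |y|) → v y = v z := fun y z hy hz h1 h2 =>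
    le_antisymm ((hv_le z y hz hy).2 h2) ((hv_le y z hy hz).2 h1)
  have hvx : v x = γ := by
    rw [← hx₀v]
    exact hveq x x₀ (ne_of_gt hxpos) hx₀ne ⟨1, by simp [hx]⟩ ⟨1, by simp [hx]⟩
  have hmem₁ : ∀ y : R, y ∈ A₁ ∨ y ∈ B₁ := fun y => by
    have : y ∈ A₁ ∪ B₁ := by rw [hcut₁]; trivial
    exact this
  have hdB₁ : d ∈ B₁ := (hmem₁ d).resolve_left hdA₁
  set r : R := max a d with hr
  have hrA₂ : r ∈ A₂ := by
    rcases max_choice a d with h | h <;> rw [hr, h] <;> assumption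
  have hrB₁ : r ∈ B₁ := by
    rcases hmem₁ r with h | h
    · exact absurd (hlt₁ r h d hdB₁) (not_lt.mpr (le_max_right a d))
    · exact h
  -- every element of A₁ lies strictly below r - x/2
  have hkey : ∀ a₁ ∈ A₁, a₁ < r - x / 2 := by
    intro a₁ ha₁
    by_contra h
    push_neg at h
    have ha₁r : a₁ < r := hlt₁ a₁ ha₁ r hrB₁
    have hrx : r - x ∈ A₁ := by
      rcases hmem₁ (r - x) with h' | h'
      · exact h'
      · exact absurd (hlt₁ a₁ ha₁ (r - x) h') (by push_neg; linarith)
    apply hγS₁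
    rw [hS₁]
    refine ⟨r - x, hrx, r, hrB₁, ?_⟩
    rw [sub_sub_cancel, hvx]
  set s : R := x / 2 with hs
  have hspos : 0 < s := by rw [hs]; linarith
  set r' : R := r - s with hr'
  have hr'B₁ : r' ∈ B₁ := by
    rcases hmem₁ r' with h | h
    · exact absurd (hkey r' h) (lt_irrefl r')
    · exact h
  -- bound b - a in terms of x
  have hab : a < b := hlt₂ a haA₂ b hbB₂
  have hrb : r < b := hlt₂ r hrA₂ b hbB₂
  obtain ⟨n, hn⟩ : ∃ n : ℕ, |b - a| ≤ (n : R) * |x| := by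
    refine (hv_le (b - a) x (ne_of_gt (by linarith : (0:R) < b - a)) (ne_of_gt hxpos)).1 ?_
    rw [hvx, hγ]
  have hba : b - a ≤ (n : R) * x := by
    rwa [abs_of_pos (by linarith), abs_of_pos hxpos] at hn
  have hbr' : b - r' ≤ ((n : R) + 1) * x := by
    have : a ≤ r := le_max_left a d
    have hxs : s ≤ x := by rw [hs]; linarith
    rw [hr']; push_cast; nlinarith
  have hbr'pos : s < b - r' := by rw [hr']; linarith
  -- the polynomial
  refine ⟨Polynomial.C s⁻¹ * Polynomial.X + Polynomial.C (-(s⁻¹ * r')), ?_, r, hrA₂, b, hbB₂,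
    hA₁.choose, hA₁.choose_spec, r', hr'B₁, ?_, ?_⟩
  · exact Polynomial.degree_linear (by positivity)
  · intro c hrc hcb
    have heval : (Polynomial.C s⁻¹ * Polynomial.X + Polynomial.C (-(s⁻¹ * r'))).eval c
        = s⁻¹ * (c - r') := by simp; ring
    have hcr' : s < c - r' := by rw [hr']; linarith
    have hsinv : 0 < s⁻¹ := inv_pos.mpr hspos
    have hE1 : (1 : R) < s⁻¹ * (c - r') := by
      rw [show (1 : R) = s⁻¹ * s by field_simp]
      exact mul_lt_mul_of_pos_left hcr' hsinv
    have hEub : s⁻¹ * (c - r') ≤ 2 * ((n : R) + 1) := by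
      have h1 : c - r' ≤ ((n : R) + 1) * x := le_trans (by linarith) hbr'
      have h2 : x = 2 * s := by rw [hs]; ring
      rw [show (2 : R) * ((n : R) + 1) = s⁻¹ * (((n : R) + 1) * x) by
        rw [h2]; field_simp]
      exact mul_le_mul_of_nonneg_left h1 (le_of_lt hsinv)
    rw [heval]
    refine ⟨by linarith, ?_, ?_⟩
    · rw [hO]
      refine ⟨2 * n + 2, ?_⟩
      rw [abs_of_pos (by linarith)]
      push_cast; linarith
    · rw [hO]
      refine ⟨1, ?_⟩
      have hEpos : 0 < s⁻¹ * (c - r') := by linarith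
      rw [abs_of_pos (inv_pos.mpr hEpos)]
      push_cast
      rw [inv_le_one_iff₀]
      right; linarith
  · intro c hc1 hc2
    have heval : (Polynomial.C s⁻¹ * Polynomial.X + Polynomial.C (-(s⁻¹ * r'))).eval c
        = s⁻¹ * (c - r') := by simp; ring
    rw [heval]
    exact mul_neg_of_pos_of_neg (inv_pos.mpr hspos) (by linarith)
end

section
/- Let R be a real closed field with natural valuation v, value group Γ, and ring of finite elements O = {a ∈ R : |a| ≤ n for some n ∈ ℕ}. Let (A₁,B₁) and (A₂,B₂) be distinct proper cuts of R with A₁ ⊊ A₂, let S = {v(b−a) : a ∈ A₁, b ∈ B₁} = {v(b−a) : a ∈ A₂, b ∈ B₂} (assumed equal) and U = {v(a′−a) : a, a′ ∈ B₁ ∩ A₂, a < a′}. If S ∩ U ≠ ∅, then there exists a polynomial f ∈ R[X] of degree 1, elements a₁ ∈ A₁, b₁ ∈ B₁ and a₂ ∈ A₂, b₂ ∈ B₂, such that for every c with a₁ < c < b₁ one has f(c) > 0 and f(c) is a unit of O (both f(c) and f(c)⁻¹ lie in O), while for every c with a₂ < c < b₂ one has f(c) < 0. -/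
/-- if the two cuts have the same lower cut `S` and `S ∩ U ≠ ∅`, there is a
degree-one polynomial which is positive with unit values on a neighbourhood of `(A₁,B₁)`
and negative on a neighbourhood of `(A₂,B₂)`. -/
theorem separating_linear_poly_of_S_inter_U_nonempty {R Γ : Type*} [Field R] [LinearOrder R] [IsStrictOrderedRing R]
    [AddCommGroup Γ] [LinearOrder Γ] [IsOrderedAddMonoid Γ]
    -- R is real closed:
    (hsq : ∀ a : R, 0 ≤ a → ∃ b : R, b * b = a)
    (hodd : ∀ p : Polynomial R, Odd p.natDegree → ∃ x : R, p.eval x = 0)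
    -- v is the natural valuation of R with value group Γ:
    (v : R → Γ)
    (hv_surj : ∀ γ : Γ, ∃ a : R, a ≠ 0 ∧ v a = γ)
    (hv_mul : ∀ a b : R, a ≠ 0 → b ≠ 0 → v (a * b) = v a + v b)
    (hv_le : ∀ a b : R, a ≠ 0 → b ≠ 0 → (v b ≤ v a ↔ ∃ n : ℕ, |a| ≤ (n : R) * |b|))
    -- the ring of finite elements:
    (O : Set R) (hO : O = {a : R | ∃ n : ℕ, |a| ≤ (n : R)})
    -- (A₁,B₁) and (A₂,B₂) are proper cuts of R:
    (A₁ B₁ A₂ B₂ : Set R)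
    (hcut₁ : A₁ ∪ B₁ = Set.univ) (hdisj₁ : A₁ ∩ B₁ = ∅)
    (hlt₁ : ∀ a ∈ A₁, ∀ b ∈ B₁, a < b)
    (hcut₂ : A₂ ∪ B₂ = Set.univ) (hdisj₂ : A₂ ∩ B₂ = ∅)
    (hlt₂ : ∀ a ∈ A₂, ∀ b ∈ B₂, a < b)
    (hA₁ : A₁.Nonempty) (hB₁ : B₁.Nonempty) (hA₂ : A₂.Nonempty) (hB₂ : B₂.Nonempty)
    (hsub : A₁ ⊂ A₂)
    (S U : Set Γ)
    (hS₁ : S = {γ : Γ | ∃ a ∈ A₁, ∃ b ∈ B₁, γ = v (b - a)})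
    (hS₂ : S = {γ : Γ | ∃ a ∈ A₂, ∃ b ∈ B₂, γ = v (b - a)})
    (hU : U = {γ : Γ | ∃ a ∈ B₁ ∩ A₂, ∃ a' ∈ B₁ ∩ A₂, a < a' ∧ γ = v (a' - a)})
    (hSU : (S ∩ U).Nonempty) :
    ∃ f : Polynomial R, f.degree = 1 ∧
      ∃ a₁ ∈ A₁, ∃ b₁ ∈ B₁, ∃ a₂ ∈ A₂, ∃ b₂ ∈ B₂,
        (∀ c : R, a₁ < c → c < b₁ →
          0 < f.eval c ∧ f.eval c ∈ O ∧ (f.eval c)⁻¹ ∈ O) ∧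
        (∀ c : R, a₂ < c → c < b₂ → f.eval c < 0) := by

  obtain ⟨γ, hγS, hγU⟩ := hSU
  rw [hS₁] at hγS
  rw [hU] at hγU
  obtain ⟨a₁, ha₁, b₁, hb₁, hγb⟩ := hγS
  obtain ⟨a, ⟨haB, haA⟩, a', ⟨ha'B, ha'A⟩, haa', hγa⟩ := hγU
  obtain ⟨b₂, hb₂⟩ := hB₂
  -- b₁' = min a b₁
  set b₁' : R := min a b₁ with hb₁'def
  have hb₁'B : b₁' ∈ B₁ := by
    rcases min_choice a b₁ with h | h <;> rw [hb₁'def, h] <;> assumption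
  have ha₁b₁ : a₁ < b₁ := hlt₁ a₁ ha₁ b₁ hb₁
  have ha₁b₁' : a₁ < b₁' := hlt₁ a₁ ha₁ b₁' hb₁'B
  have hb₁'a : b₁' ≤ a := min_le_left a b₁
  have hb₁'a' : b₁' < a' := lt_of_le_of_lt hb₁'a haa'
  set δ : R := a' - b₁' with hδdef
  have hδpos : (0:R) < δ := sub_pos.2 hb₁'a'
  have hδne : δ ≠ 0 := ne_of_gt hδpos
  have hεpos : (0:R) < a' - a := sub_pos.2 haa'
  have hεδ : a' - a ≤ δ := by
    simp only [hδdef]; linarith [hb₁'a]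
  -- bound b₁ - a₁ ≤ n * (a' - a)
  have hvle : v (a' - a) ≤ v (b₁ - a₁) := by rw [← hγa, ← hγb]
  obtain ⟨n, hn⟩ := (hv_le (b₁ - a₁) (a' - a) (ne_of_gt (sub_pos.2 ha₁b₁))
    (ne_of_gt hεpos)).1 hvle
  rw [abs_of_pos (sub_pos.2 ha₁b₁), abs_of_pos hεpos] at hn
  have hnδ : b₁ - a₁ ≤ (n : R) * δ := by
    calc b₁ - a₁ ≤ (n : R) * (a' - a) := hn
    _ ≤ (n : R) * δ := by
      apply mul_le_mul_of_nonneg_left hεδ (Nat.cast_nonneg n)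
  -- the polynomial
  refine ⟨Polynomial.C (-(1/δ)) * Polynomial.X + Polynomial.C (a'/δ), ?_,
    a₁, ha₁, b₁', hb₁'B, a', ha'A, b₂, hb₂, ?_, ?_⟩
  · exact Polynomial.degree_linear (by simp [hδne])
  · intro c hc₁ hc₂
    have heval : (Polynomial.C (-(1/δ)) * Polynomial.X + Polynomial.C (a'/δ)).eval c
        = (a' - c) / δ := by simp; ring
    rw [heval]
    have h1 : (1:R) < (a' - c) / δ := by
      rw [lt_div_iff₀ hδpos]
      simp only [hδdef]; linarith
    have hpos : (0:R) < (a' - c) / δ := lt_trans zero_lt_one h1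
    refine ⟨hpos, ?_, ?_⟩
    · rw [hO]
      refine ⟨n + 1, ?_⟩
      rw [abs_of_pos hpos, div_le_iff₀ hδpos]
      push_cast
      have : a' - c ≤ δ + (n : R) * δ := by
        have hb : b₁' ≤ b₁ := min_le_right a b₁
        simp only [hδdef] at *
        linarith
      linarith [this]
    · rw [hO]
      refine ⟨1, ?_⟩
      rw [abs_of_pos (inv_pos.2 hpos)]
      push_cast
      rw [inv_le_one_iff₀]
      right; exact le_of_lt h1
  · intro c hc₁ hc₂
    have heval : (Polynomial.C (-(1/δ)) * Polynomial.X + Polynomial.C (a'/δ)).eval c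
        = (a' - c) / δ := by simp; ring
    rw [heval]
    exact div_neg_of_neg_of_pos (by linarith) hδpos
end

section
/- Let R be a real closed field. For every a ∈ R, the two orderings P_a⁻ and P_a⁺ of R(X) corresponding to the principal cuts ({x ∈ R : x < a}, {x ∈ R : x ≥ a}) and ({x ∈ R : x ≤ a}, {x ∈ R : x > a}) determine the same ℝ-place: λ_{P_a⁻} = λ_{P_a⁺}. Similarly, the two orderings P_∞⁻ and P_∞⁺ corresponding to the improper cuts (∅, R) and (R, ∅) determine the same ℝ-place: λ_{P_∞⁻} = λ_{P_∞⁺}. -/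
attribute [local instance] Classical.propDecidable

/-- The ordering `P_∞⁻` of `R(X)` corresponding to the improper cut `(∅, R)`. -/
def infMinusOrdering (R : Type*) [Field R] [LinearOrder R] [IsStrictOrderedRing R] : Set (RatFunc R) :=
  {f : RatFunc R | f = 0 ∨ ∃ b : R, ∀ c : R, c < b →
    Polynomial.eval c f.denom ≠ 0 ∧ 0 < RatFunc.eval (RingHom.id R) c f}

/-- The ordering `P_∞⁺` of `R(X)` corresponding to the improper cut `(R, ∅)`. -/
def infPlusOrdering (R : Type*) [Field R] [LinearOrder R] [IsStrictOrderedRing R] : Set (RatFunc R) :=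
  {f : RatFunc R | f = 0 ∨ ∃ a : R, ∀ c : R, a < c →
    Polynomial.eval c f.denom ≠ 0 ∧ 0 < RatFunc.eval (RingHom.id R) c f}



section Helpers

open Polynomial

variable {R : Type*} [Field R] [LinearOrder R] [IsStrictOrderedRing R]


/-- Bound a polynomial's values on `|c - a| ≤ 1`. -/
lemma poly_bound (p : R[X]) (a : R) : ∃ M : R, 0 ≤ M ∧ ∀ c : R, |c - a| ≤ 1 → |p.eval c| ≤ M := by
  refine ⟨∑ i ∈ Finset.range (p.natDegree + 1), |p.coeff i| * (|a| + 1) ^ i,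
    Finset.sum_nonneg fun i _ => by positivity, fun c hc => ?_⟩
  rw [Polynomial.eval_eq_sum_range]
  refine (Finset.abs_sum_le_sum_abs _ _).trans (Finset.sum_le_sum fun i _ => ?_)
  rw [abs_mul, abs_pow]
  have hca : |c| ≤ |a| + 1 := by
    have := abs_sub_abs_le_abs_sub c a
    linarith
  exact mul_le_mul_of_nonneg_left
    (pow_le_pow_left₀ (abs_nonneg c) hca i) (abs_nonneg _)

/-- A polynomial positive at `a` is positive near `a`. -/
lemma eval_pos_near {p : R[X]} {a : R} (hp : 0 < p.eval a) :
    ∃ ε : R, 0 < ε ∧ ∀ c : R, |c - a| < ε → 0 < p.eval c := by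
  obtain ⟨r, hr⟩ : (X - C a) ∣ (p - C (p.eval a)) := by
    rw [Polynomial.dvd_iff_isRoot]
    simp [Polynomial.IsRoot]
  obtain ⟨M, hM0, hM⟩ := poly_bound r a
  refine ⟨min 1 (p.eval a / (M + 1)), lt_min one_pos (by positivity), fun c hc => ?_⟩
  have hc1 : |c - a| < 1 := lt_of_lt_of_le hc (min_le_left _ _)
  have hc2 : |c - a| < p.eval a / (M + 1) := lt_of_lt_of_le hc (min_le_right _ _)
  have key : p.eval c = p.eval a + (c - a) * r.eval c := by
    have := congrArg (Polynomial.eval c) hr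
    simp at this
    linarith
  have hb : |(c - a) * r.eval c| ≤ |c - a| * M := by
    rw [abs_mul]
    exact mul_le_mul_of_nonneg_left (hM c hc1.le) (abs_nonneg _)
  have h2 : |c - a| * M < p.eval a := by
    calc |c - a| * M ≤ |c - a| * (M + 1) :=
          mul_le_mul_of_nonneg_left (by linarith) (abs_nonneg _)
      _ < (p.eval a / (M + 1)) * (M + 1) := by
          apply mul_lt_mul_of_pos_right hc2; positivity
      _ = p.eval a := by field_simp
  have := abs_le.mp (le_of_lt (lt_of_le_of_lt hb h2))
  have := neg_abs_le ((c - a) * r.eval c)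
  have habs := abs_le.mp (hb.trans h2.le)
  linarith [habs.1]

/-- A nonzero polynomial is nonvanishing on a punctured neighborhood of `a`. -/
lemma eval_ne_zero_near {p : R[X]} (hp : p ≠ 0) (a : R) :
    ∃ ε : R, 0 < ε ∧ ∀ c : R, |c - a| < ε → c ≠ a → p.eval c ≠ 0 := by
  set k := rootMultiplicity a p with hk
  set u := p /ₘ (X - C a) ^ k with hu
  have hfac : (X - C a) ^ k * u = p := Polynomial.pow_mul_divByMonic_rootMultiplicity_eq p a
  have hua : u.eval a ≠ 0 := Polynomial.eval_divByMonic_pow_rootMultiplicity_ne_zero a hp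
  have hsq : (0:R) < (u * u).eval a := by
    rw [Polynomial.eval_mul]
    exact mul_self_pos.mpr hua
  obtain ⟨ε, hε, h⟩ := eval_pos_near hsq
  refine ⟨ε, hε, fun c hc hca => ?_⟩
  have huc : u.eval c ≠ 0 := by
    have := h c hc
    rw [Polynomial.eval_mul] at this
    exact fun h0 => by simp [h0] at this
  have : p.eval c = (c - a) ^ k * u.eval c := by
    rw [← hfac]; simp
  rw [this]
  exact mul_ne_zero (pow_ne_zero _ (sub_ne_zero.mpr hca)) huc

/-- A polynomial with positive leading coefficient is eventually positive. -/
lemma eval_pos_atTop {p : R[X]} (hp : 0 < p.leadingCoeff) :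
    ∃ M : R, ∀ c : R, M ≤ c → 0 < p.eval c := by
  rcases Nat.eq_zero_or_pos p.natDegree with hn | hn
  · refine ⟨0, fun c _ => ?_⟩
    rw [Polynomial.eval_eq_sum_range, hn]
    simpa using by simpa [Polynomial.leadingCoeff, hn] using hp
  · set n := p.natDegree with hdef
    set S := ∑ i ∈ Finset.range n, |p.coeff i| with hS
    have hS0 : 0 ≤ S := Finset.sum_nonneg fun i _ => abs_nonneg _
    refine ⟨max 1 ((S + 1) / p.leadingCoeff), fun c hc => ?_⟩
    have hc1 : (1:R) ≤ c := le_trans (le_max_left _ _) hc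
    have hc0 : (0:R) < c := lt_of_lt_of_le one_pos hc1
    have hcS : S + 1 ≤ p.leadingCoeff * c :=
      (div_le_iff₀' hp).mp (le_trans (le_max_right _ _) hc)
    have key : p.eval c = p.leadingCoeff * c ^ n + ∑ i ∈ Finset.range n, p.coeff i * c ^ i := by
      rw [Polynomial.eval_eq_sum_range, Finset.sum_range_succ]
      rw [Polynomial.coeff_natDegree]
      ring
    have hbound : |∑ i ∈ Finset.range n, p.coeff i * c ^ i| ≤ S * c ^ (n - 1) := by
      refine (Finset.abs_sum_le_sum_abs _ _).trans ?_
      rw [Finset.sum_mul]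
      refine Finset.sum_le_sum fun i hi => ?_
      rw [abs_mul, abs_pow, abs_of_pos hc0]
      refine mul_le_mul_of_nonneg_left ?_ (abs_nonneg _)
      exact pow_le_pow_right₀ hc1 (Nat.le_sub_one_of_lt (Finset.mem_range.mp hi))
    have hcn : c ^ n = c ^ (n - 1) * c := by
      rw [← pow_succ, Nat.sub_add_cancel hn]
    have hpow : (0:R) < c ^ (n-1) := pow_pos hc0 _
    have h1 : S * c ^ (n-1) < p.leadingCoeff * c ^ n := by
      rw [hcn]
      nlinarith
    have habs := abs_le.mp hbound
    rw [key]
    linarith [habs.1]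

/-- Eventual positivity at `-∞`. -/
lemma eval_pos_atBot {p : R[X]} (hp : 0 < p.leadingCoeff * (-1) ^ p.natDegree) :
    ∃ M : R, ∀ c : R, c ≤ M → 0 < p.eval c := by
  have hp0 : p ≠ 0 := by
    rintro rfl; simp at hp
  set q : R[X] := p.comp (-X) with hq
  have hqlc : q.leadingCoeff = p.leadingCoeff * (-1) ^ p.natDegree := by
    rw [hq, Polynomial.leadingCoeff_comp (by simp)]
    simp
  obtain ⟨M, hM⟩ := eval_pos_atTop (p := q) (by rw [hqlc]; exact hp)
  refine ⟨-M, fun c hc => ?_⟩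
  have := hM (-c) (by linarith)
  rwa [hq, Polynomial.eval_comp, Polynomial.eval_neg, Polynomial.eval_X, neg_neg] at this

lemma ratfunc_eval_num_denom (f : RatFunc R) (c : R) :
    RatFunc.eval (RingHom.id R) c f = f.num.eval c / f.denom.eval c := rfl

instance : CharZero (RatFunc R) := by
  refine charZero_of_injective_algebraMap (R := R) ?_
  intro x y h
  have : algebraMap R[X] (RatFunc R) (C x) = algebraMap R[X] (RatFunc R) (C y) := by
    rwa [RatFunc.algebraMap_C, RatFunc.algebraMap_C]
  exact Polynomial.C_injective (RatFunc.algebraMap_injective R this)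

lemma ratCast_ratfunc (q : ℚ) : (q : RatFunc R) = RatFunc.C (q : R) := by
  have := eq_ratCast ((RatFunc.C (K := R)).comp (Rat.castHom R)) q
  simpa using this.symm

/-- Evaluation of a fraction of polynomials. -/
lemma ratfunc_eval_eq {p q : R[X]} (hq : q ≠ 0) {c : R} (hqc : q.eval c ≠ 0) :
    (algebraMap R[X] (RatFunc R) p / algebraMap R[X] (RatFunc R) q).denom.eval c ≠ 0 ∧
    RatFunc.eval (RingHom.id R) c (algebraMap R[X] (RatFunc R) p / algebraMap R[X] (RatFunc R) q)
      = p.eval c / q.eval c := by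
  set f := algebraMap R[X] (RatFunc R) p / algebraMap R[X] (RatFunc R) q with hf
  obtain ⟨d, hd⟩ : f.denom ∣ q := (RatFunc.denom_dvd hq).mpr ⟨p, rfl⟩
  have hdenc : f.denom.eval c ≠ 0 := by
    intro h0
    apply hqc
    rw [hd, Polynomial.eval_mul, h0, zero_mul]
  refine ⟨hdenc, ?_⟩
  have hcross : f.num * q = p * f.denom := by
    apply RatFunc.algebraMap_injective R
    rw [map_mul, map_mul,
      ← div_eq_div_iff (RatFunc.algebraMap_ne_zero (RatFunc.denom_ne_zero f))
        (RatFunc.algebraMap_ne_zero hq),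
      RatFunc.num_div_denom f, hf]
  have hcrossc : f.num.eval c * q.eval c = p.eval c * f.denom.eval c := by
    have := congrArg (Polynomial.eval c) hcross
    simpa using this
  rw [ratfunc_eval_num_denom]
  field_simp
  linarith [hcrossc]

/-- `g - C t` as an explicit fraction. -/
lemma sub_C_repr (g : RatFunc R) (t : R) :
    g - RatFunc.C t = algebraMap R[X] (RatFunc R) (g.num - C t * g.denom) /
      algebraMap R[X] (RatFunc R) g.denom := by
  rw [map_sub, map_mul, sub_div, mul_div_assoc,
    div_self (RatFunc.algebraMap_ne_zero (RatFunc.denom_ne_zero g)), mul_one,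
    RatFunc.num_div_denom, RatFunc.algebraMap_C]

lemma C_sub_repr (g : RatFunc R) (t : R) :
    RatFunc.C t - g = algebraMap R[X] (RatFunc R) (C t * g.denom - g.num) /
      algebraMap R[X] (RatFunc R) g.denom := by
  rw [map_sub, map_mul, sub_div, mul_div_assoc,
    div_self (RatFunc.algebraMap_ne_zero (RatFunc.denom_ne_zero g)), mul_one,
    RatFunc.num_div_denom, RatFunc.algebraMap_C]

lemma add_C_repr (g : RatFunc R) (t : R) :
    RatFunc.C t + g = algebraMap R[X] (RatFunc R) (C t * g.denom + g.num) /
      algebraMap R[X] (RatFunc R) g.denom := by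
  rw [map_add, map_mul, add_div, mul_div_assoc,
    div_self (RatFunc.algebraMap_ne_zero (RatFunc.denom_ne_zero g)), mul_one,
    RatFunc.num_div_denom, RatFunc.algebraMap_C]

lemma div_pos_of_mul_pos {x y : R} (h : 0 < x * y) : 0 < x / y := by
  rcases mul_pos_iff.mp h with ⟨h1, h2⟩ | ⟨h1, h2⟩
  · exact div_pos h1 h2
  · exact div_pos_of_neg_of_neg h1 h2

lemma final_contra {t D N : R} (hD : D ≠ 0) (h1 : 0 < (t * D - N) / D)
    (h2 : 0 < (t * D + N) / D) (h3 : t ^ 2 * D ^ 2 < N ^ 2) : False := by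
  have hm : 0 < ((t * D - N) / D) * ((t * D + N) / D) := mul_pos h1 h2
  rw [div_mul_div_comm] at hm
  rcases div_pos_iff.mp hm with ⟨h, _⟩ | ⟨_, h⟩
  · nlinarith
  · nlinarith [mul_self_pos.mpr hD]

lemma eval_pos_and_neg_false {f : RatFunc R} {c : R} (hd : f.denom.eval c ≠ 0)
    (h1 : 0 < RatFunc.eval (RingHom.id R) c f)
    (h2 : 0 < RatFunc.eval (RingHom.id R) c (-f)) : False := by
  have hrepr : -f = algebraMap R[X] (RatFunc R) (-f.num) / algebraMap R[X] (RatFunc R) f.denom := by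
    rw [map_neg, neg_div, RatFunc.num_div_denom]
  rw [hrepr, (ratfunc_eval_eq (RatFunc.denom_ne_zero f) hd).2] at h2
  rw [ratfunc_eval_num_denom] at h1
  rw [Polynomial.eval_neg, neg_div] at h2
  linarith

lemma disj_cut_left (a : R) (f : RatFunc R) (hf : f ≠ 0)
    (h1 : f ∈ cutOrdering {x : R | x < a} {x : R | a ≤ x})
    (h2 : -f ∈ cutOrdering {x : R | x < a} {x : R | a ≤ x}) : False := by
  rcases h1 with h0 | ⟨a₁, ha₁, b₁, hb₁, hc₁⟩
  · exact hf h0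
  rcases h2 with h0 | ⟨a₂, ha₂, b₂, hb₂, hc₂⟩
  · exact hf (neg_eq_zero.mp h0)
  simp only [Set.mem_setOf_eq] at ha₁ ha₂ hb₁ hb₂
  set c := (max a₁ a₂ + a) / 2 with hc
  have hm : max a₁ a₂ < a := max_lt ha₁ ha₂
  have hca : c < a := by rw [hc]; linarith
  have h₁ := hc₁ c (by rw [hc]; have := le_max_left a₁ a₂; linarith) (lt_of_lt_of_le hca hb₁)
  have h₂ := hc₂ c (by rw [hc]; have := le_max_right a₁ a₂; linarith) (lt_of_lt_of_le hca hb₂)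
  exact eval_pos_and_neg_false h₁.1 h₁.2 h₂.2

lemma disj_cut_right (a : R) (f : RatFunc R) (hf : f ≠ 0)
    (h1 : f ∈ cutOrdering {x : R | x ≤ a} {x : R | a < x})
    (h2 : -f ∈ cutOrdering {x : R | x ≤ a} {x : R | a < x}) : False := by
  rcases h1 with h0 | ⟨a₁, ha₁, b₁, hb₁, hc₁⟩
  · exact hf h0
  rcases h2 with h0 | ⟨a₂, ha₂, b₂, hb₂, hc₂⟩
  · exact hf (neg_eq_zero.mp h0)
  simp only [Set.mem_setOf_eq] at ha₁ ha₂ hb₁ hb₂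
  set c := (a + min b₁ b₂) / 2 with hc
  have hm : a < min b₁ b₂ := lt_min hb₁ hb₂
  have hca : a < c := by rw [hc]; linarith
  have h₁ := hc₁ c (lt_of_le_of_lt ha₁ hca) (by rw [hc]; have := min_le_left b₁ b₂; linarith)
  have h₂ := hc₂ c (lt_of_le_of_lt ha₂ hca) (by rw [hc]; have := min_le_right b₁ b₂; linarith)
  exact eval_pos_and_neg_false h₁.1 h₁.2 h₂.2

lemma disj_inf_minus (f : RatFunc R) (hf : f ≠ 0)
    (h1 : f ∈ infMinusOrdering R) (h2 : -f ∈ infMinusOrdering R) : False := by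
  rcases h1 with h0 | ⟨b₁, hc₁⟩
  · exact hf h0
  rcases h2 with h0 | ⟨b₂, hc₂⟩
  · exact hf (neg_eq_zero.mp h0)
  have h₁ := hc₁ (min b₁ b₂ - 1) (by have := min_le_left b₁ b₂; linarith)
  have h₂ := hc₂ (min b₁ b₂ - 1) (by have := min_le_right b₁ b₂; linarith)
  exact eval_pos_and_neg_false h₁.1 h₁.2 h₂.2

lemma disj_inf_plus (f : RatFunc R) (hf : f ≠ 0)
    (h1 : f ∈ infPlusOrdering R) (h2 : -f ∈ infPlusOrdering R) : False := by
  rcases h1 with h0 | ⟨a₁, hc₁⟩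
  · exact hf h0
  rcases h2 with h0 | ⟨a₂, hc₂⟩
  · exact hf (neg_eq_zero.mp h0)
  have h₁ := hc₁ (max a₁ a₂ + 1) (by have := le_max_left a₁ a₂; linarith)
  have h₂ := hc₂ (max a₁ a₂ + 1) (by have := le_max_right a₁ a₂; linarith)
  exact eval_pos_and_neg_false h₁.1 h₁.2 h₂.2

lemma abs_same_place (P₁ P₂ : Set (RatFunc R))
    (hd1 : ∀ f : RatFunc R, f ≠ 0 → f ∈ P₁ → -f ∈ P₁ → False)
    (hd2 : ∀ f : RatFunc R, f ≠ 0 → f ∈ P₂ → -f ∈ P₂ → False)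
    (hmain : ∀ g : RatFunc R,
      (∀ q : ℚ, 0 < q → ¬(RatFunc.C ((q:ℚ):R) - g ∈ P₁ ∧ RatFunc.C ((q:ℚ):R) + g ∈ P₁) ∧
                 ¬(RatFunc.C ((q:ℚ):R) - g ∈ P₂ ∧ RatFunc.C ((q:ℚ):R) + g ∈ P₂)) ∨
      (∃ L : R, (∀ t : R, t < L → (g - RatFunc.C t ∈ P₁ ∧ g - RatFunc.C t ∈ P₂)) ∧
                (∀ t : R, L < t → (RatFunc.C t - g ∈ P₁ ∧ RatFunc.C t - g ∈ P₂)) ∧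
                (∀ t : R, g = RatFunc.C t → t = L))) :
    rPlace P₁ = rPlace P₂ := by
  funext g
  rcases hmain g with hpole | ⟨L, hlt, hgt, hconst⟩
  · have h1 : g ∉ orderValRing P₁ := by
      rintro ⟨q, hq, hA, hB⟩
      rw [ratCast_ratfunc] at hA hB
      exact (hpole q hq).1 ⟨hA, hB⟩
    have h2 : g ∉ orderValRing P₂ := by
      rintro ⟨q, hq, hA, hB⟩
      rw [ratCast_ratfunc] at hA hB
      exact (hpole q hq).2 ⟨hA, hB⟩
    rw [rPlace, rPlace, if_neg h1, if_neg h2]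
  · by_cases hb : ∃ n : ℕ, |L| < (n : R)
    · -- bounded case
      obtain ⟨n, hn⟩ := hb
      have hn0 : 0 < (n : ℚ) := by
        have : (0:R) < (n:R) := lt_of_le_of_lt (abs_nonneg L) hn
        exact_mod_cast this
      have hcastn : (((n:ℚ)) : R) = (n : R) := by push_cast; ring
      have mem : ∀ P : Set (RatFunc R),
          (∀ t : R, t < L → g - RatFunc.C t ∈ P) →
          (∀ t : R, L < t → RatFunc.C t - g ∈ P) → g ∈ orderValRing P := by
        intro P h1 h2
        refine ⟨(n:ℚ), hn0, ?_, ?_⟩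
        · rw [ratCast_ratfunc]
          exact h2 _ (by rw [hcastn]; exact lt_of_le_of_lt (le_abs_self L) hn)
        · rw [ratCast_ratfunc]
          have := h1 (-(((n:ℚ)):R)) (by
            rw [hcastn]
            calc -(n:R) < -|L| := by linarith
              _ ≤ L := neg_abs_le L)
          rw [map_neg, sub_neg_eq_add, add_comm] at this
          exact this
      have mem1 := mem P₁ (fun t ht => (hlt t ht).1) (fun t ht => (hgt t ht).1)
      have mem2 := mem P₂ (fun t ht => (hlt t ht).2) (fun t ht => (hgt t ht).2)
      rw [rPlace, rPlace, if_pos mem1, if_pos mem2]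
      norm_cast
      -- sup equality
      set Tlow : Set ℝ := {r : ℝ | ∃ q : ℚ, r = (q:ℝ) ∧ ((q:ℚ):R) < L} with hTlow
      have hlowne : Tlow.Nonempty := by
        refine ⟨((-(n:ℚ)-1 : ℚ) : ℝ), -(n:ℚ)-1, rfl, ?_⟩
        push_cast
        calc -(n:R) - 1 < -|L| := by linarith
          _ ≤ L := neg_abs_le L
      have key : ∀ P : Set (RatFunc R),
          (∀ f : RatFunc R, f ≠ 0 → f ∈ P → -f ∈ P → False) →
          (∀ t : R, t < L → g - RatFunc.C t ∈ P) →
          (∀ t : R, L < t → RatFunc.C t - g ∈ P) →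
          sSup {r : ℝ | ∃ q : ℚ, r = (q : ℝ) ∧ g - (q : RatFunc R) ∈ P} = sSup Tlow := by
        intro P hd h1 h2
        set T := {r : ℝ | ∃ q : ℚ, r = (q : ℝ) ∧ g - (q : RatFunc R) ∈ P} with hT
        have hsub : Tlow ⊆ T := by
          rintro r ⟨q, rfl, hq⟩
          exact ⟨q, rfl, by rw [ratCast_ratfunc]; exact h1 _ hq⟩
        have hub : ∀ r ∈ T, ∃ q : ℚ, r = (q:ℝ) ∧ ((q:ℚ):R) ≤ L := by
          rintro r ⟨q, rfl, hq⟩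
          refine ⟨q, rfl, ?_⟩
          by_contra hL
          push_neg at hL
          rw [ratCast_ratfunc] at hq
          have hCg := h2 _ hL
          rcases eq_or_ne (g - RatFunc.C ((q:ℚ):R)) 0 with h0 | h0
          · have : g = RatFunc.C ((q:ℚ):R) := by linear_combination (norm := abel) h0
            exact absurd (hconst _ this) (by intro h; rw [h] at hL; exact lt_irrefl _ hL)
          · exact hd _ h0 hq (by rwa [neg_sub])
        have hbddT : BddAbove T := by
          refine ⟨((n:ℚ):ℝ), ?_⟩
          rintro r hr
          obtain ⟨q, rfl, hqL⟩ := hub r hr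
          have : ((q:ℚ):R) < (((n:ℚ)):R) := by rw [hcastn]; exact lt_of_le_of_lt (hqL.trans (le_abs_self L)) hn
          have hqn : q < (n:ℚ) := by exact_mod_cast this
          exact_mod_cast hqn.le
        have hbddTlow : BddAbove Tlow := hbddT.mono hsub
        refine le_antisymm ?_ (csSup_le_csSup hbddT hlowne hsub)
        apply csSup_le (hlowne.mono hsub)
        rintro r hr
        obtain ⟨q, rfl, hqL⟩ := hub r hr
        by_contra hlt'
        push_neg at hlt'
        obtain ⟨q'', hq1, hq2⟩ := exists_rat_btwn hlt'
        have hq''q : q'' < q := by exact_mod_cast hq2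
        have : ((q'':ℚ):R) < L := lt_of_lt_of_le (by exact_mod_cast hq''q) hqL
        have hmem : ((q'':ℚ):ℝ) ∈ Tlow := ⟨q'', rfl, this⟩
        exact absurd (le_csSup hbddTlow hmem) (not_le.mpr hq1)
      rw [key P₁ hd1 (fun t ht => (hlt t ht).1) (fun t ht => (hgt t ht).1),
        key P₂ hd2 (fun t ht => (hlt t ht).2) (fun t ht => (hgt t ht).2)]
    · -- unbounded case
      have hall : ∀ q : ℚ, ((q:ℚ):R) ≤ |L| := by
        intro q
        by_contra h
        push_neg at h
        apply hb
        refine ⟨⌈q⌉₊ + 1, lt_of_lt_of_le h ?_⟩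
        have h1 : (q:R) ≤ ((⌈q⌉₊ : ℚ) : R) := by
          have := Nat.le_ceil q
          exact_mod_cast this
        push_cast at h1 ⊢
        linarith
      have notin : ∀ P : Set (RatFunc R),
          (∀ f : RatFunc R, f ≠ 0 → f ∈ P → -f ∈ P → False) →
          (∀ t : R, t < L → g - RatFunc.C t ∈ P) →
          (∀ t : R, L < t → RatFunc.C t - g ∈ P) →
          g ∉ orderValRing P := by
        rintro P hd h1 h2 ⟨q, hq, hA, hB⟩
        rw [ratCast_ratfunc] at hA hB
        rcases le_or_gt 0 L with hL0 | hL0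
        · have habs : |L| = L := abs_of_nonneg hL0
          have hql : ((q:ℚ):R) < L := by
            have := hall (q+1)
            rw [habs] at this
            push_cast at this ⊢
            linarith
          have hmem := h1 _ hql
          have hne : g - RatFunc.C ((q:ℚ):R) ≠ 0 := by
            intro h0
            have hg : g = RatFunc.C ((q:ℚ):R) := by linear_combination (norm := abel) h0
            have := hconst _ hg
            rw [this] at hql
            exact lt_irrefl _ hql
          exact hd _ hne hmem (by rwa [neg_sub])
        · have habs : |L| = -L := abs_of_neg hL0
          have hql : L < ((-q:ℚ):R) := by
            have := hall (q+1)
            rw [habs] at this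
            push_cast at this ⊢
            linarith
          have hmem := h2 _ hql
          have heq : RatFunc.C ((-q:ℚ):R) - g = -(RatFunc.C ((q:ℚ):R) + g) := by
            push_cast
            rw [map_neg]
            ring
          rw [heq] at hmem
          have hne : RatFunc.C ((q:ℚ):R) + g ≠ 0 := by
            intro h0
            have hg : g = RatFunc.C ((-q:ℚ):R) := by
              push_cast at h0 ⊢
              rw [map_neg]
              linear_combination (norm := abel) h0
            have := hconst _ hg
            rw [← this] at hql
            exact lt_irrefl _ hql
          exact hd _ hne hB hmem
      rw [rPlace, rPlace,
        if_neg (notin P₁ hd1 (fun t ht => (hlt t ht).1) (fun t ht => (hgt t ht).1)),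
        if_neg (notin P₂ hd2 (fun t ht => (hlt t ht).2) (fun t ht => (hgt t ht).2))]

/-- If `g = RatFunc.C t` then `t` is determined as `num/denom` evaluated anywhere. -/
lemma const_val {g : RatFunc R} {t : R} (hg : g = RatFunc.C t) (a : R) :
    t = g.num.eval a / g.denom.eval a := by
  subst hg
  simp [RatFunc.num_C, RatFunc.denom_C]

lemma left_mem_elim {a : R} {f : RatFunc R} (hf : f ≠ 0)
    (h : f ∈ cutOrdering {x : R | x < a} {x : R | a ≤ x}) :
    ∃ a' : R, a' < a ∧ ∀ c : R, a' < c → c < a →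
      f.denom.eval c ≠ 0 ∧ 0 < RatFunc.eval (RingHom.id R) c f := by
  rcases h with h0 | ⟨a₁, ha₁, b₁, hb₁, hc⟩
  · exact absurd h0 hf
  · exact ⟨a₁, ha₁, fun c h1 h2 => hc c h1 (lt_of_lt_of_le h2 hb₁)⟩

lemma right_mem_elim {a : R} {f : RatFunc R} (hf : f ≠ 0)
    (h : f ∈ cutOrdering {x : R | x ≤ a} {x : R | a < x}) :
    ∃ b' : R, a < b' ∧ ∀ c : R, a < c → c < b' →
      f.denom.eval c ≠ 0 ∧ 0 < RatFunc.eval (RingHom.id R) c f := by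
  rcases h with h0 | ⟨a₁, ha₁, b₁, hb₁, hc⟩
  · exact absurd h0 hf
  · exact ⟨b₁, hb₁, fun c h1 h2 => hc c (lt_of_le_of_lt ha₁ h1) h2⟩

lemma left_mem_intro {a ε : R} {f : RatFunc R} (hε : 0 < ε)
    (h : ∀ c : R, a - ε < c → c < a →
      f.denom.eval c ≠ 0 ∧ 0 < RatFunc.eval (RingHom.id R) c f) :
    f ∈ cutOrdering {x : R | x < a} {x : R | a ≤ x} :=
  Or.inr ⟨a - ε, by simp only [Set.mem_setOf_eq]; linarith, a,
    by simp only [Set.mem_setOf_eq]; exact le_refl a, fun c h1 h2 => h c h1 h2⟩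

lemma right_mem_intro {a ε : R} {f : RatFunc R} (hε : 0 < ε)
    (h : ∀ c : R, a < c → c < a + ε →
      f.denom.eval c ≠ 0 ∧ 0 < RatFunc.eval (RingHom.id R) c f) :
    f ∈ cutOrdering {x : R | x ≤ a} {x : R | a < x} :=
  Or.inr ⟨a, by simp only [Set.mem_setOf_eq]; exact le_refl a, a + ε,
    by simp only [Set.mem_setOf_eq]; linarith, fun c h1 h2 => h c h1 h2⟩

lemma hmain_point (a : R) (g : RatFunc R) :
    (∀ q : ℚ, 0 < q →
      ¬(RatFunc.C ((q:ℚ):R) - g ∈ cutOrdering {x : R | x < a} {x : R | a ≤ x} ∧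
        RatFunc.C ((q:ℚ):R) + g ∈ cutOrdering {x : R | x < a} {x : R | a ≤ x}) ∧
      ¬(RatFunc.C ((q:ℚ):R) - g ∈ cutOrdering {x : R | x ≤ a} {x : R | a < x} ∧
        RatFunc.C ((q:ℚ):R) + g ∈ cutOrdering {x : R | x ≤ a} {x : R | a < x})) ∨
    (∃ L : R,
      (∀ t : R, t < L → (g - RatFunc.C t ∈ cutOrdering {x : R | x < a} {x : R | a ≤ x} ∧
        g - RatFunc.C t ∈ cutOrdering {x : R | x ≤ a} {x : R | a < x})) ∧
      (∀ t : R, L < t → (RatFunc.C t - g ∈ cutOrdering {x : R | x < a} {x : R | a ≤ x} ∧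
        RatFunc.C t - g ∈ cutOrdering {x : R | x ≤ a} {x : R | a < x})) ∧
      (∀ t : R, g = RatFunc.C t → t = L)) := by
  by_cases hden : g.denom.eval a = 0
  · -- pole at a
    left
    intro q hq
    set t : R := ((q : ℚ) : R) with ht
    have hnum : g.num.eval a ≠ 0 := by
      intro h0
      obtain ⟨u, v, huv⟩ := RatFunc.isCoprime_num_denom g
      have := congrArg (Polynomial.eval a) huv
      simp [h0, hden] at this
    have hwa : (0:R) < (g.num * g.num - C (t^2) * (g.denom * g.denom)).eval a := by
      have : (g.num * g.num - C (t^2) * (g.denom * g.denom)).eval a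
          = g.num.eval a * g.num.eval a := by simp [hden]
      rw [this]
      exact mul_self_pos.mpr hnum
    obtain ⟨ε₁, hε₁, hw⟩ := eval_pos_near hwa
    obtain ⟨ε₂, hε₂, hdnz⟩ := eval_ne_zero_near (RatFunc.denom_ne_zero g) a
    have hCne : RatFunc.C t - g ≠ 0 := by
      intro h0
      have hg : g = RatFunc.C t := by linear_combination (norm := abel) -h0
      rw [hg, RatFunc.denom_C] at hden
      simp at hden
    have contra : ∀ c : R, |c - a| < ε₁ → |c - a| < ε₂ → c ≠ a →
        0 < RatFunc.eval (RingHom.id R) c (RatFunc.C t - g) →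
        0 < RatFunc.eval (RingHom.id R) c (RatFunc.C t + g) → False := by
      intro c h1 h2 hca hA hB
      have hdc : g.denom.eval c ≠ 0 := hdnz c h2 hca
      rw [C_sub_repr g t, (ratfunc_eval_eq (RatFunc.denom_ne_zero g) hdc).2] at hA
      rw [add_C_repr g t, (ratfunc_eval_eq (RatFunc.denom_ne_zero g) hdc).2] at hB
      simp only [Polynomial.eval_sub, Polynomial.eval_add, Polynomial.eval_mul,
        Polynomial.eval_C] at hA hB
      have hwc := hw c h1
      simp only [Polynomial.eval_sub, Polynomial.eval_mul, Polynomial.eval_C] at hwc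
      exact final_contra hdc hA hB (by nlinarith)
    constructor
    · rintro ⟨hA, hB⟩
      obtain ⟨a₁, ha₁, h₁⟩ := left_mem_elim hCne hA
      have hBne : RatFunc.C t + g ≠ 0 := by
        intro h0
        have hg : g = RatFunc.C (-t) := by
          rw [map_neg]
          linear_combination (norm := abel) h0
        rw [hg, RatFunc.denom_C] at hden
        simp at hden
      obtain ⟨a₂, ha₂, h₂⟩ := left_mem_elim hBne hB
      set m := max (max a₁ a₂) (a - min ε₁ ε₂) with hm
      have hma : m < a := by
        rw [hm]
        apply max_lt (max_lt ha₁ ha₂)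
        have := lt_min hε₁ hε₂
        linarith
      set c := (m + a) / 2 with hc
      have hmc : m < c := by rw [hc]; linarith
      have hca : c < a := by rw [hc]; linarith
      have habs : |c - a| ≤ (a - m) / 2 := by
        rw [abs_sub_comm, abs_of_pos (by linarith)]
        rw [hc]; linarith
      have hub : a - m ≤ min ε₁ ε₂ := by
        have := le_max_right (max a₁ a₂) (a - min ε₁ ε₂)
        rw [hm] at *
        linarith [le_max_right (max a₁ a₂) (a - min ε₁ ε₂)]
      have h1' : |c - a| < ε₁ := by
        have := min_le_left ε₁ ε₂
        have h2 := lt_min hε₁ hε₂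
        calc |c - a| ≤ (a - m)/2 := habs
          _ < min ε₁ ε₂ := by linarith
          _ ≤ ε₁ := min_le_left _ _
      have h2' : |c - a| < ε₂ := by
        calc |c - a| ≤ (a - m)/2 := habs
          _ < min ε₁ ε₂ := by linarith [lt_min hε₁ hε₂]
          _ ≤ ε₂ := min_le_right _ _
      have e₁ := h₁ c (lt_of_le_of_lt (by rw [hm]; exact le_trans (le_max_left a₁ a₂) (le_max_left _ _)) hmc) hca
      have e₂ := h₂ c (lt_of_le_of_lt (by rw [hm]; exact le_trans (le_max_right a₁ a₂) (le_max_left _ _)) hmc) hca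
      exact contra c h1' h2' (ne_of_lt hca) e₁.2 e₂.2
    · rintro ⟨hA, hB⟩
      obtain ⟨b₁, hb₁, h₁⟩ := right_mem_elim hCne hA
      have hBne : RatFunc.C t + g ≠ 0 := by
        intro h0
        have hg : g = RatFunc.C (-t) := by
          rw [map_neg]
          linear_combination (norm := abel) h0
        rw [hg, RatFunc.denom_C] at hden
        simp at hden
      obtain ⟨b₂, hb₂, h₂⟩ := right_mem_elim hBne hB
      set m := min (min b₁ b₂) (a + min ε₁ ε₂) with hm
      have hma : a < m := by
        rw [hm]
        apply lt_min (lt_min hb₁ hb₂)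
        have := lt_min hε₁ hε₂
        linarith
      set c := (a + m) / 2 with hc
      have hmc : c < m := by rw [hc]; linarith
      have hca : a < c := by rw [hc]; linarith
      have habs : |c - a| ≤ (m - a) / 2 := by
        rw [abs_of_pos (by linarith)]
        rw [hc]; linarith
      have hub : m - a ≤ min ε₁ ε₂ := by
        have := min_le_right (min b₁ b₂) (a + min ε₁ ε₂)
        rw [hm] at *
        linarith [min_le_right (min b₁ b₂) (a + min ε₁ ε₂)]
      have h1' : |c - a| < ε₁ := by
        calc |c - a| ≤ (m - a)/2 := habs
          _ < min ε₁ ε₂ := by linarith [lt_min hε₁ hε₂]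
          _ ≤ ε₁ := min_le_left _ _
      have h2' : |c - a| < ε₂ := by
        calc |c - a| ≤ (m - a)/2 := habs
          _ < min ε₁ ε₂ := by linarith [lt_min hε₁ hε₂]
          _ ≤ ε₂ := min_le_right _ _
      have e₁ := h₁ c hca (lt_of_lt_of_le hmc (by rw [hm]; exact le_trans (min_le_left _ _) (min_le_left b₁ b₂)))
      have e₂ := h₂ c hca (lt_of_lt_of_le hmc (by rw [hm]; exact le_trans (min_le_left _ _) (min_le_right b₁ b₂)))
      exact contra c h1' h2' (ne_of_gt hca) e₁.2 e₂.2
  · -- finite value at a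
    right
    refine ⟨g.num.eval a / g.denom.eval a, ?_, ?_, fun t hg => const_val hg a⟩
    · intro t ht
      have hkey : (0:R) < ((g.num - C t * g.denom) * g.denom).eval a := by
        have hval : ((g.num - C t * g.denom) * g.denom).eval a
            = (g.num.eval a - t * g.denom.eval a) * g.denom.eval a := by simp
        have h2 : (g.num.eval a - t * g.denom.eval a) * g.denom.eval a
            = (g.num.eval a / g.denom.eval a - t) * (g.denom.eval a * g.denom.eval a) := by
          field_simp
        rw [hval, h2]
        exact mul_pos (sub_pos.mpr ht) (mul_self_pos.mpr hden)
      obtain ⟨ε, hε, hpos⟩ := eval_pos_near hkey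
      have hcond : ∀ c : R, |c - a| < ε →
          (algebraMap R[X] (RatFunc R) (g.num - C t * g.denom) /
            algebraMap R[X] (RatFunc R) g.denom).denom.eval c ≠ 0 ∧
          0 < RatFunc.eval (RingHom.id R) c (algebraMap R[X] (RatFunc R) (g.num - C t * g.denom) /
            algebraMap R[X] (RatFunc R) g.denom) := by
        intro c hc
        have hp := hpos c hc
        rw [Polynomial.eval_mul] at hp
        have hdc : g.denom.eval c ≠ 0 := by
          intro h0
          rw [h0, mul_zero] at hp
          exact lt_irrefl _ hp
        obtain ⟨hd', he⟩ := ratfunc_eval_eq (p := g.num - C t * g.denom)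
          (RatFunc.denom_ne_zero g) hdc
        exact ⟨hd', by rw [he]; exact div_pos_of_mul_pos hp⟩
      constructor
      · rw [sub_C_repr g t]
        refine left_mem_intro hε fun c h1 h2 => hcond c ?_
        rw [abs_sub_comm, abs_of_pos (by linarith)]
        linarith
      · rw [sub_C_repr g t]
        refine right_mem_intro hε fun c h1 h2 => hcond c ?_
        rw [abs_of_pos (by linarith)]
        linarith
    · intro t ht
      have hkey : (0:R) < ((C t * g.denom - g.num) * g.denom).eval a := by
        have hval : ((C t * g.denom - g.num) * g.denom).eval a
            = (t * g.denom.eval a - g.num.eval a) * g.denom.eval a := by simp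
        have h2 : (t * g.denom.eval a - g.num.eval a) * g.denom.eval a
            = (t - g.num.eval a / g.denom.eval a) * (g.denom.eval a * g.denom.eval a) := by
          field_simp
        rw [hval, h2]
        exact mul_pos (sub_pos.mpr ht) (mul_self_pos.mpr hden)
      obtain ⟨ε, hε, hpos⟩ := eval_pos_near hkey
      have hcond : ∀ c : R, |c - a| < ε →
          (algebraMap R[X] (RatFunc R) (C t * g.denom - g.num) /
            algebraMap R[X] (RatFunc R) g.denom).denom.eval c ≠ 0 ∧
          0 < RatFunc.eval (RingHom.id R) c (algebraMap R[X] (RatFunc R) (C t * g.denom - g.num) /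
            algebraMap R[X] (RatFunc R) g.denom) := by
        intro c hc
        have hp := hpos c hc
        rw [Polynomial.eval_mul] at hp
        have hdc : g.denom.eval c ≠ 0 := by
          intro h0
          rw [h0, mul_zero] at hp
          exact lt_irrefl _ hp
        obtain ⟨hd', he⟩ := ratfunc_eval_eq (p := C t * g.denom - g.num)
          (RatFunc.denom_ne_zero g) hdc
        exact ⟨hd', by rw [he]; exact div_pos_of_mul_pos hp⟩
      constructor
      · rw [C_sub_repr g t]
        refine left_mem_intro hε fun c h1 h2 => hcond c ?_
        rw [abs_sub_comm, abs_of_pos (by linarith)]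
        linarith
      · rw [C_sub_repr g t]
        refine right_mem_intro hε fun c h1 h2 => hcond c ?_
        rw [abs_of_pos (by linarith)]
        linarith

lemma neg_one_pow_double (n : ℕ) : ((-1:R)) ^ (n + n) = 1 := by
  rw [← two_mul, pow_mul]
  simp

/-- eventual positivity of `u/denom` on both sides, from leading coefficient data -/
lemma both_inf_mem {g : RatFunc R} {u : R[X]}
    (hdegu : u.natDegree = g.denom.natDegree)
    (hlc : 0 < u.leadingCoeff * g.denom.leadingCoeff) :
    (algebraMap R[X] (RatFunc R) u / algebraMap R[X] (RatFunc R) g.denom ∈ infMinusOrdering R) ∧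
    (algebraMap R[X] (RatFunc R) u / algebraMap R[X] (RatFunc R) g.denom ∈ infPlusOrdering R) := by
  have hu0 : u ≠ 0 := by
    intro h0
    rw [h0] at hlc
    simp at hlc
  have hlcv : (u * g.denom).leadingCoeff = u.leadingCoeff * g.denom.leadingCoeff :=
    leadingCoeff_mul u g.denom
  have hdv : (u * g.denom).natDegree = g.denom.natDegree + g.denom.natDegree := by
    rw [natDegree_mul hu0 (RatFunc.denom_ne_zero g), hdegu]
  have hcond : ∀ c : R, 0 < (u * g.denom).eval c →
      (algebraMap R[X] (RatFunc R) u / algebraMap R[X] (RatFunc R) g.denom).denom.eval c ≠ 0 ∧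
      0 < RatFunc.eval (RingHom.id R) c
        (algebraMap R[X] (RatFunc R) u / algebraMap R[X] (RatFunc R) g.denom) := by
    intro c hp
    rw [Polynomial.eval_mul] at hp
    have hdc : g.denom.eval c ≠ 0 := by
      intro h0
      rw [h0, mul_zero] at hp
      exact lt_irrefl _ hp
    obtain ⟨hd', he⟩ := ratfunc_eval_eq (p := u) (RatFunc.denom_ne_zero g) hdc
    exact ⟨hd', by rw [he]; exact div_pos_of_mul_pos hp⟩
  constructor
  · obtain ⟨M, hM⟩ := eval_pos_atBot (p := u * g.denom)
      (by rw [hlcv, hdv, neg_one_pow_double, mul_one]; exact hlc)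
    exact Or.inr ⟨M, fun c hc => hcond c (hM c hc.le)⟩
  · obtain ⟨M, hM⟩ := eval_pos_atTop (p := u * g.denom) (by rw [hlcv]; exact hlc)
    exact Or.inr ⟨M, fun c hc => hcond c (hM c hc.le)⟩

lemma hmain_inf (g : RatFunc R) :
    (∀ q : ℚ, 0 < q →
      ¬(RatFunc.C ((q:ℚ):R) - g ∈ infMinusOrdering R ∧
        RatFunc.C ((q:ℚ):R) + g ∈ infMinusOrdering R) ∧
      ¬(RatFunc.C ((q:ℚ):R) - g ∈ infPlusOrdering R ∧
        RatFunc.C ((q:ℚ):R) + g ∈ infPlusOrdering R)) ∨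
    (∃ L : R,
      (∀ t : R, t < L → (g - RatFunc.C t ∈ infMinusOrdering R ∧
        g - RatFunc.C t ∈ infPlusOrdering R)) ∧
      (∀ t : R, L < t → (RatFunc.C t - g ∈ infMinusOrdering R ∧
        RatFunc.C t - g ∈ infPlusOrdering R)) ∧
      (∀ t : R, g = RatFunc.C t → t = L)) := by
  have hD0 : g.denom ≠ 0 := RatFunc.denom_ne_zero g
  have hDlc : g.denom.leadingCoeff ≠ 0 := leadingCoeff_ne_zero.mpr hD0
  by_cases hdeg : g.num.natDegree ≤ g.denom.natDegree
  · right
    refine ⟨g.num.coeff g.denom.natDegree / g.denom.leadingCoeff, ?_, ?_, ?_⟩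
    · intro t ht
      have hcoeff : (g.num - C t * g.denom).coeff g.denom.natDegree
          = g.num.coeff g.denom.natDegree - t * g.denom.leadingCoeff := by
        rw [coeff_sub, coeff_C_mul, coeff_natDegree]
      have hpos : 0 < (g.num - C t * g.denom).coeff g.denom.natDegree * g.denom.leadingCoeff := by
        have h2 : (g.num - C t * g.denom).coeff g.denom.natDegree * g.denom.leadingCoeff
            = (g.num.coeff g.denom.natDegree / g.denom.leadingCoeff - t)
              * (g.denom.leadingCoeff * g.denom.leadingCoeff) := by
          rw [hcoeff]
          field_simp
        rw [h2]
        exact mul_pos (sub_pos.mpr ht) (mul_self_pos.mpr hDlc)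
      have hune : (g.num - C t * g.denom).coeff g.denom.natDegree ≠ 0 := by
        intro h0
        rw [h0, zero_mul] at hpos
        exact lt_irrefl _ hpos
      have hud : (g.num - C t * g.denom).natDegree = g.denom.natDegree :=
        le_antisymm ((natDegree_sub_le _ _).trans
          (max_le hdeg (natDegree_C_mul_le _ _))) (le_natDegree_of_ne_zero hune)
      have hlcu : (g.num - C t * g.denom).leadingCoeff
          = (g.num - C t * g.denom).coeff g.denom.natDegree := by
        rw [leadingCoeff, hud]
      have := both_inf_mem (g := g) (u := g.num - C t * g.denom) hud (by rw [hlcu]; exact hpos)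
      rw [sub_C_repr g t]
      exact this
    · intro t ht
      have hcoeff : (C t * g.denom - g.num).coeff g.denom.natDegree
          = t * g.denom.leadingCoeff - g.num.coeff g.denom.natDegree := by
        rw [coeff_sub, coeff_C_mul, coeff_natDegree]
      have hpos : 0 < (C t * g.denom - g.num).coeff g.denom.natDegree * g.denom.leadingCoeff := by
        have h2 : (C t * g.denom - g.num).coeff g.denom.natDegree * g.denom.leadingCoeff
            = (t - g.num.coeff g.denom.natDegree / g.denom.leadingCoeff)
              * (g.denom.leadingCoeff * g.denom.leadingCoeff) := by
          rw [hcoeff]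
          field_simp
        rw [h2]
        exact mul_pos (sub_pos.mpr ht) (mul_self_pos.mpr hDlc)
      have hune : (C t * g.denom - g.num).coeff g.denom.natDegree ≠ 0 := by
        intro h0
        rw [h0, zero_mul] at hpos
        exact lt_irrefl _ hpos
      have hud : (C t * g.denom - g.num).natDegree = g.denom.natDegree :=
        le_antisymm ((natDegree_sub_le _ _).trans
          (max_le (natDegree_C_mul_le _ _) hdeg)) (le_natDegree_of_ne_zero hune)
      have hlcu : (C t * g.denom - g.num).leadingCoeff
          = (C t * g.denom - g.num).coeff g.denom.natDegree := by
        rw [leadingCoeff, hud]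
      have := both_inf_mem (g := g) (u := C t * g.denom - g.num) hud (by rw [hlcu]; exact hpos)
      rw [C_sub_repr g t]
      exact this
    · intro t hg
      subst hg
      simp [RatFunc.num_C, RatFunc.denom_C]
  · -- pole at infinity
    left
    push_neg at hdeg
    have hnum0 : g.num ≠ 0 := by
      intro h0
      rw [h0] at hdeg
      simp at hdeg
    intro q hq
    set t : R := ((q : ℚ) : R) with htdef
    have hconstne : ∀ s : R, g ≠ RatFunc.C s := by
      intro s hg
      rw [hg] at hdeg
      simp [RatFunc.num_C, RatFunc.denom_C] at hdeg
    -- the polynomial w = num^2 - t^2 denom^2 has positive even-degree leading behavior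
    have hwdeg_small : (C (t^2) * (g.denom * g.denom)).natDegree
        < g.num.natDegree + g.num.natDegree := by
      calc (C (t^2) * (g.denom * g.denom)).natDegree ≤ (g.denom * g.denom).natDegree :=
            natDegree_C_mul_le _ _
        _ ≤ g.denom.natDegree + g.denom.natDegree := natDegree_mul_le
        _ < g.num.natDegree + g.num.natDegree := by omega
    have hnn : (g.num * g.num).natDegree = g.num.natDegree + g.num.natDegree :=
      natDegree_mul hnum0 hnum0
    have hcoeffw : (g.num * g.num - C (t^2) * (g.denom * g.denom)).coeff
        (g.num.natDegree + g.num.natDegree) = g.num.leadingCoeff * g.num.leadingCoeff := by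
      rw [coeff_sub, coeff_eq_zero_of_natDegree_lt hwdeg_small, sub_zero, ← hnn,
        coeff_natDegree, leadingCoeff_mul]
    have hwne : (g.num * g.num - C (t^2) * (g.denom * g.denom)).coeff
        (g.num.natDegree + g.num.natDegree) ≠ 0 := by
      rw [hcoeffw]
      exact mul_ne_zero (leadingCoeff_ne_zero.mpr hnum0) (leadingCoeff_ne_zero.mpr hnum0)
    have hwd : (g.num * g.num - C (t^2) * (g.denom * g.denom)).natDegree
        = g.num.natDegree + g.num.natDegree :=
      le_antisymm ((natDegree_sub_le _ _).trans
        (max_le hnn.le hwdeg_small.le)) (le_natDegree_of_ne_zero hwne)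
    have hwlc : 0 < (g.num * g.num - C (t^2) * (g.denom * g.denom)).leadingCoeff := by
      rw [leadingCoeff, hwd, hcoeffw]
      exact mul_self_pos.mpr (leadingCoeff_ne_zero.mpr hnum0)
    have hddeg : (g.denom * g.denom).natDegree = g.denom.natDegree + g.denom.natDegree :=
      natDegree_mul hD0 hD0
    have hdlc : 0 < (g.denom * g.denom).leadingCoeff := by
      rw [leadingCoeff_mul]
      exact mul_self_pos.mpr hDlc
    obtain ⟨MwP, hMwP⟩ := eval_pos_atTop hwlc
    obtain ⟨MwN, hMwN⟩ := eval_pos_atBot (p := g.num * g.num - C (t^2) * (g.denom * g.denom))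
      (by rw [hwd, neg_one_pow_double, mul_one]; exact hwlc)
    obtain ⟨MdP, hMdP⟩ := eval_pos_atTop hdlc
    obtain ⟨MdN, hMdN⟩ := eval_pos_atBot (p := g.denom * g.denom)
      (by rw [hddeg, neg_one_pow_double, mul_one]; exact hdlc)
    have contra : ∀ c : R, 0 < (g.num * g.num - C (t^2) * (g.denom * g.denom)).eval c →
        0 < (g.denom * g.denom).eval c →
        0 < RatFunc.eval (RingHom.id R) c (RatFunc.C t - g) →
        0 < RatFunc.eval (RingHom.id R) c (RatFunc.C t + g) → False := by
      intro c hwc hdc2 hA hB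
      rw [Polynomial.eval_mul] at hdc2
      have hdc : g.denom.eval c ≠ 0 := fun h0 => by rw [h0, mul_zero] at hdc2; exact lt_irrefl _ hdc2
      rw [C_sub_repr g t, (ratfunc_eval_eq (RatFunc.denom_ne_zero g) hdc).2] at hA
      rw [add_C_repr g t, (ratfunc_eval_eq (RatFunc.denom_ne_zero g) hdc).2] at hB
      simp only [Polynomial.eval_sub, Polynomial.eval_add, Polynomial.eval_mul,
        Polynomial.eval_C] at hA hB
      simp only [Polynomial.eval_sub, Polynomial.eval_mul, Polynomial.eval_C] at hwc
      exact final_contra hdc hA hB (by nlinarith)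
    have hCne : RatFunc.C t - g ≠ 0 := by
      intro h0
      exact hconstne t (by linear_combination (norm := abel) -h0)
    have hBne : RatFunc.C t + g ≠ 0 := by
      intro h0
      refine hconstne (-t) ?_
      rw [map_neg]
      linear_combination (norm := abel) h0
    constructor
    · rintro ⟨hA, hB⟩
      rcases hA with h0 | ⟨b₁, h₁⟩
      · exact hCne h0
      rcases hB with h0 | ⟨b₂, h₂⟩
      · exact hBne h0
      set c := min (min b₁ b₂) (min MwN MdN) - 1 with hc
      have e₁ := h₁ c (by rw [hc]; have h := (min_le_left b₁ b₂).trans' (min_le_left (min b₁ b₂) (min MwN MdN)); linarith [min_le_left (min b₁ b₂) (min MwN MdN), min_le_left b₁ b₂])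
      have e₂ := h₂ c (by rw [hc]; linarith [min_le_left (min b₁ b₂) (min MwN MdN), min_le_right b₁ b₂])
      have hw := hMwN c (by rw [hc]; linarith [min_le_right (min b₁ b₂) (min MwN MdN), min_le_left MwN MdN])
      have hd := hMdN c (by rw [hc]; linarith [min_le_right (min b₁ b₂) (min MwN MdN), min_le_right MwN MdN])
      exact contra c hw hd e₁.2 e₂.2
    · rintro ⟨hA, hB⟩
      rcases hA with h0 | ⟨a₁, h₁⟩
      · exact hCne h0
      rcases hB with h0 | ⟨a₂, h₂⟩
      · exact hBne h0
      set c := max (max a₁ a₂) (max MwP MdP) + 1 with hc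
      have e₁ := h₁ c (by rw [hc]; linarith [le_max_left (max a₁ a₂) (max MwP MdP), le_max_left a₁ a₂])
      have e₂ := h₂ c (by rw [hc]; linarith [le_max_left (max a₁ a₂) (max MwP MdP), le_max_right a₁ a₂])
      have hw := hMwP c (by rw [hc]; linarith [le_max_right (max a₁ a₂) (max MwP MdP), le_max_left MwP MdP])
      have hd := hMdP c (by rw [hc]; linarith [le_max_right (max a₁ a₂) (max MwP MdP), le_max_right MwP MdP])
      exact contra c hw hd e₁.2 e₂.2


end Helpers

/-- for a real closed field `R`, the orderings `P_a⁻`, `P_a⁺` of `R(X)` given by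
the two principal cuts at any `a ∈ R` determine the same ℝ-place, and the orderings `P_∞⁻`,
`P_∞⁺` given by the improper cuts `(∅,R)` and `(R,∅)` determine the same ℝ-place. -/
theorem principal_and_improper_cuts_same_place {R : Type*} [Field R] [LinearOrder R] [IsStrictOrderedRing R]
    -- R is real closed:
    (hsq : ∀ a : R, 0 ≤ a → ∃ b : R, b * b = a)
    (hodd : ∀ p : Polynomial R, Odd p.natDegree → ∃ x : R, p.eval x = 0) :
    (∀ a : R,
      rPlace (cutOrdering {x : R | x < a} {x : R | a ≤ x}) =
        rPlace (cutOrdering {x : R | x ≤ a} {x : R | a < x})) ∧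
    rPlace (infMinusOrdering R) = rPlace (infPlusOrdering R) := by
  constructor
  · intro a
    exact abs_same_place _ _ (disj_cut_left a) (disj_cut_right a) (hmain_point a)
  · exact abs_same_place _ _ disj_inf_minus disj_inf_plus hmain_inf
end

section
/- Let k be a field, Γ a nontrivial linearly ordered abelian group, and κ the cofinality of Γ. Let k((Γ)) be the field of Hahn series over k with value group Γ (formal series a = Σ_{γ∈Γ} a_γ x^γ with well-ordered support), with valuation v(a) = min supp(a) for a ≠ 0. Let k_κ((Γ)) = {a ∈ k((Γ)) : |supp(a)| < κ, or supp(a) is cofinal in Γ of order type κ}. Then k_κ((Γ)) is complete as a uniform space with respect to the uniformity with base {V_γ : γ ∈ Γ}, where V_γ = {(a,b) : a = b or v(a−b) > γ}: every Cauchy filter (equivalently, every Cauchy net) on k_κ((Γ)) converges to an element of k_κ((Γ)). -/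
/-- for a field `k` and a nontrivial linearly ordered abelian group `Γ` of
cofinality `κ`, the subfield `k_κ((Γ))` of the Hahn series field `k((Γ))` consisting of
series whose support has cardinality `< κ` or is cofinal in `Γ` of order type `κ` is
complete for the valuation uniformity: every Cauchy filter on it converges in it.
(The valuation is `v(a) = min supp(a)`, and the uniformity has base
`V_γ = {(a,b) : a = b ∨ v(a−b) > γ}`.) -/
theorem hahn_subfield_complete {k Γ : Type*} [Field k] [AddCommGroup Γ] [LinearOrder Γ] [IsOrderedAddMonoid Γ]
    [Nontrivial Γ]
    -- κ is the cofinality of Γ (the least cardinality of a cofinal subset):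
    (κ : Cardinal)
    (hκ : κ = sInf {c : Cardinal | ∃ s : Set Γ, (∀ x : Γ, ∃ y ∈ s, x ≤ y) ∧ Cardinal.mk s = c})
    -- the subfield `k_κ((Γ))`:
    (Kκ : Set (HahnSeries Γ k))
    (hKκ : Kκ = {a : HahnSeries Γ k | Cardinal.mk a.support < κ ∨
      ((∀ γ : Γ, ∃ δ ∈ a.support, γ ≤ δ) ∧ Nonempty (a.support ≃o κ.ord.ToType))})
    -- a Cauchy filter on `k_κ((Γ))`:
    (F : Filter (HahnSeries Γ k)) (hne : F.NeBot) (hmem : Kκ ∈ F)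
    (hCauchy : ∀ γ : Γ, ∃ t ∈ F, ∀ a ∈ t, ∀ b ∈ t, a = b ∨ γ < (a - b).order) :
    -- it converges to an element of `k_κ((Γ))`:
    ∃ l ∈ Kκ, ∀ γ : Γ, {b : HahnSeries Γ k | b = l ∨ γ < (b - l).order} ∈ F := by
  classical
  -- a positive element of Γ
  obtain ⟨g, hg⟩ : ∃ g : Γ, 0 < g := by
    obtain ⟨x, hx⟩ := exists_ne (0 : Γ)
    rcases lt_trichotomy 0 x with h | h | h
    · exact ⟨x, h⟩
    · exact absurd h.symm hx
    · exact ⟨-x, by simpa using h⟩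
  choose t ht hsep using hCauchy
  set s : Γ → Set (HahnSeries Γ k) := fun γ => t γ ∩ Kκ with hs
  have hsF : ∀ γ, s γ ∈ F := fun γ => F.inter_mem (ht γ) hmem
  choose a ha using fun γ => F.nonempty_of_mem (hsF γ)
  -- coherence of coefficients
  have key : ∀ γ δ, δ ≤ γ → ∀ b ∈ s γ, b.coeff δ = (a δ).coeff δ := by
    intro γ δ hδ b hb
    obtain ⟨c, hc⟩ := F.nonempty_of_mem (F.inter_mem (hsF γ) (hsF δ))
    have h1 : b.coeff δ = c.coeff δ := by
      rcases hsep γ b hb.1 c hc.1.1 with h | h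
      · rw [h]
      · have h0 : (b - c).coeff δ = 0 :=
          HahnSeries.coeff_eq_zero_of_lt_order (hδ.trans_lt h)
        rw [HahnSeries.coeff_sub] at h0
        exact sub_eq_zero.1 h0
    have h2 : c.coeff δ = (a δ).coeff δ := by
      rcases hsep δ c hc.2.1 (a δ) (ha δ).1 with h | h
      · rw [h]
      · have h0 : (c - a δ).coeff δ = 0 :=
          HahnSeries.coeff_eq_zero_of_lt_order h
        rw [HahnSeries.coeff_sub] at h0
        exact sub_eq_zero.1 h0
    rw [h1, h2]
  set f : Γ → k := fun δ => (a δ).coeff δ with hf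
  have hcoe : ∀ γ δ, δ ≤ γ → f δ = (a γ).coeff δ :=
    fun γ δ h => (key γ δ h (a γ) (ha γ)).symm
  have hsupp : ∀ γ, Function.support f ∩ Set.Iic γ = (a γ).support ∩ Set.Iic γ := by
    intro γ
    ext δ
    simp only [Set.mem_inter_iff, Function.mem_support, HahnSeries.mem_support, Set.mem_Iic]
    constructor
    · rintro ⟨h1, h2⟩; exact ⟨by rw [← hcoe γ δ h2]; exact h1, h2⟩
    · rintro ⟨h1, h2⟩; exact ⟨by rw [hcoe γ δ h2]; exact h1, h2⟩
  have hwf : (Function.support f).IsWF := by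
    rw [Set.isWF_iff_no_descending_seq]
    intro seq hseq hmemseq
    have hmem' : ∀ n, seq n ∈ (a (seq 0)).support := by
      intro n
      have : seq n ∈ Function.support f ∩ Set.Iic (seq 0) :=
        ⟨hmemseq n, hseq.antitone (Nat.zero_le n)⟩
      rw [hsupp] at this
      exact this.1
    exact (Set.isWF_iff_no_descending_seq.1 (a (seq 0)).isWF_support) seq hseq hmem'
  set l : HahnSeries Γ k := ⟨f, hwf.isPWO⟩ with hl
  have hlcoeff : l.coeff = f := rfl
  have hlsupp : l.support = Function.support f := rfl
  -- convergence
  have hconv : ∀ γ : Γ, {b : HahnSeries Γ k | b = l ∨ γ < (b - l).order} ∈ F := by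
    intro γ
    refine F.mem_of_superset (hsF γ) ?_
    intro b hb
    by_cases hbl : b = l
    · exact Or.inl hbl
    refine Or.inr ?_
    by_contra hlt
    push_neg at hlt
    have hne0 : b - l ≠ 0 := sub_ne_zero.2 hbl
    apply mt HahnSeries.coeff_order_eq_zero.1 hne0
    have hbo : b.coeff ((b - l).order) = f ((b - l).order) := key γ _ hlt b hb
    rw [HahnSeries.coeff_sub, hlcoeff, hbo, sub_self]
  -- bounded pieces of supports of members of Kκ are small
  have hbdd : ∀ (γ : Γ), ∀ b ∈ Kκ, Cardinal.mk ↥(b.support ∩ Set.Iic γ) < κ := by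
    intro γ b hbK
    rw [hKκ] at hbK
    rcases hbK with hsmall | ⟨hcof, ⟨e⟩⟩
    · exact lt_of_le_of_lt (Cardinal.mk_le_mk_of_subset Set.inter_subset_left) hsmall
    · obtain ⟨δ, hδs, hδ⟩ := hcof (γ + g)
      have hγδ : γ < δ := lt_of_lt_of_le (lt_add_of_pos_right γ hg) hδ
      have hle : Cardinal.mk ↥(b.support ∩ Set.Iic γ) ≤ Cardinal.mk ↥(Set.Iio (e ⟨δ, hδs⟩)) := by
        refine ⟨⟨fun x => ⟨e ⟨x.1, x.2.1⟩, ?_⟩, ?_⟩⟩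
        · exact e.lt_iff_lt.2 (Subtype.mk_lt_mk.2 (lt_of_le_of_lt x.2.2 hγδ))
        · intro x y hxy
          have h2 := e.injective (Subtype.ext_iff.1 hxy)
          have h3 : (x : Γ) = (y : Γ) := by simpa using Subtype.ext_iff.1 h2
          exact Subtype.ext h3
      exact hle.trans_lt (Cardinal.mk_Iio_ord_toType _)
  -- the limit is in Kκ
  have hlK : l ∈ Kκ := by
    rw [hKκ]
    by_cases hcof : ∀ γ : Γ, ∃ δ ∈ l.support, γ ≤ δ
    · right
      refine ⟨hcof, ?_⟩
      haveI hko : IsWellOrder κ.ord.ToType ((· < ·) : κ.ord.ToType → κ.ord.ToType → Prop) :=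
        isWellOrder_lt
      haveI hwo : IsWellOrder ↥(l.support) (· < ·) :=
        { toIsWellFounded := ⟨hwf⟩ }
      set τ := Ordinal.type ((· < ·) : ↥(l.support) → ↥(l.support) → Prop) with hτ
      have hseg : ∀ x : ↥(l.support), Ordinal.typein (· < ·) x < κ.ord := by
        intro x
        rw [Cardinal.lt_ord, Ordinal.card_typein]
        refine lt_of_le_of_lt ?_ (hbdd x.1 (a x.1) (ha x.1).2)
        refine ⟨⟨fun y => ⟨y.1.1, ?_⟩, ?_⟩⟩
        · have hy : (y.1 : Γ) ∈ Function.support f ∩ Set.Iic x.1 :=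
            ⟨y.1.2, le_of_lt (Subtype.coe_lt_coe.2 y.2)⟩
          rw [hsupp] at hy
          exact hy
        · intro y z hyz
          have h3 : ((y : ↥(l.support)) : Γ) = ((z : ↥(l.support)) : Γ) := by
            simpa using Subtype.ext_iff.1 hyz
          exact Subtype.ext (Subtype.ext h3)
      have hup : τ ≤ κ.ord := by
        by_contra hlt
        push_neg at hlt
        obtain ⟨x, hx⟩ := Ordinal.typein_surj _ hlt
        exact absurd (hx ▸ hseg x) (lt_irrefl _)
      have hdown : κ.ord ≤ τ := by
        rw [Cardinal.ord_le]
        have : κ ≤ Cardinal.mk ↥(l.support) := by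
          rw [hκ]
          exact csInf_le' ⟨l.support, hcof, rfl⟩
        exact this.trans_eq (Ordinal.card_type _).symm
      have htype : τ = Ordinal.type ((· < ·) : κ.ord.ToType → κ.ord.ToType → Prop) := by
        rw [Ordinal.type_toType]
        exact le_antisymm hup hdown
      obtain ⟨ri⟩ :=
        (Ordinal.type_eq (r := ((· < ·) : ↥(l.support) → ↥(l.support) → Prop))
          (s := ((· < ·) : κ.ord.ToType → κ.ord.ToType → Prop))).1 htype
      exact ⟨OrderIso.ofRelIsoLT ri⟩
    · left
      push_neg at hcof
      obtain ⟨γ, hγ⟩ := hcof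
      have hsub : l.support ⊆ (a γ).support ∩ Set.Iic γ := by
        intro δ hδ
        have : δ ∈ Function.support f ∩ Set.Iic γ := ⟨hδ, le_of_lt (hγ δ hδ)⟩
        rw [hsupp] at this
        exact this
      exact lt_of_le_of_lt (Cardinal.mk_le_mk_of_subset hsub) (hbdd γ (a γ) (ha γ).2)
  exact ⟨l, hlK, hconv⟩
end

section
/- Let K be a non-Archimedean linearly ordered field (there exists x ∈ K with n < x for all n ∈ ℕ), equipped with the uniformity whose base consists of the sets V_c = {(a,b) ∈ K × K : n·|a−b| < c for all n ∈ ℕ} for c > 0 in K (this is the uniformity of the natural valuation determined by the order of K). If K is complete with respect to this uniformity (every Cauchy filter converges), then every normal cut of K is principal; that is, K is continuously closed. -/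
open Set Filter

/-- a non-Archimedean linearly ordered field `K` which is complete with
respect to the uniformity of its natural valuation (base of entourages
`V_c = {(a,b) : n·|a−b| < c for all n ∈ ℕ}`, `c > 0`) is continuously closed:
every normal cut of `K` is principal. -/
theorem complete_implies_continuously_closed {K : Type*} [Field K] [LinearOrder K] [IsStrictOrderedRing K]
    -- K is non-Archimedean:
    (hNA : ∃ x : K, ∀ n : ℕ, (n : K) < x)
    -- K is complete: every Cauchy filter (w.r.t. the natural valuation uniformity) converges:
    (hComplete : ∀ F : Filter K, F.NeBot →
      (∀ c : K, 0 < c → ∃ t ∈ F, ∀ a ∈ t, ∀ b ∈ t, ∀ n : ℕ, (n : K) * |a - b| < c) →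
      ∃ x : K, ∀ c : K, 0 < c → {y : K | ∀ n : ℕ, (n : K) * |x - y| < c} ∈ F)
    -- (A,B) is a normal cut of K:
    (A B : Set K)
    (hcut : A ∪ B = Set.univ) (hdisj : A ∩ B = ∅)
    (hlt : ∀ a ∈ A, ∀ b ∈ B, a < b)
    (hA : A.Nonempty) (hB : B.Nonempty)
    (hnormal : ∀ c : K, 0 < c → ∃ a ∈ A, ∃ b ∈ B, b - a < c) :
    -- the cut is principal:
    (∃ m ∈ A, ∀ a ∈ A, a ≤ m) ∨ (∃ m ∈ B, ∀ b ∈ B, m ≤ b) := by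
  obtain ⟨x0, hx0⟩ := hNA
  have hx0pos : (0 : K) < x0 := by simpa using hx0 0
  have hmem : ∀ x : K, x ∈ A ∨ x ∈ B := by
    intro x
    have : x ∈ A ∪ B := by rw [hcut]; trivial
    exact this
  -- the family of intervals [a,b], a ∈ A, b ∈ B
  haveI : Nonempty (A × B) := ⟨⟨⟨hA.some, hA.some_mem⟩, ⟨hB.some, hB.some_mem⟩⟩⟩
  set f : A × B → Filter K := fun p => 𝓟 (Icc (p.1 : K) (p.2 : K)) with hf
  have hdir : Directed (· ≥ ·) f := by
    rintro ⟨⟨a, ha⟩, ⟨b, hb⟩⟩ ⟨⟨a', ha'⟩, ⟨b', hb'⟩⟩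
    have hmax : max a a' ∈ A := by
      rcases le_total a a' with h | h
      · simpa [max_eq_right h] using ha'
      · simpa [max_eq_left h] using ha
    have hmin : min b b' ∈ B := by
      rcases le_total b b' with h | h
      · simpa [min_eq_left h] using hb
      · simpa [min_eq_right h] using hb'
    refine ⟨⟨⟨max a a', hmax⟩, ⟨min b b', hmin⟩⟩, ?_, ?_⟩
    · simp only [hf, ge_iff_le, principal_mono]
      exact Icc_subset_Icc (le_max_left _ _) (min_le_left _ _)
    · simp only [hf, ge_iff_le, principal_mono]
      exact Icc_subset_Icc (le_max_right _ _) (min_le_right _ _)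
  have hne : ∀ p : A × B, (f p).NeBot := by
    rintro ⟨⟨a, ha⟩, ⟨b, hb⟩⟩
    refine principal_neBot_iff.2 (nonempty_Icc.2 ?_)
    exact (hlt a ha b hb).le
  set F : Filter K := ⨅ p, f p with hF
  haveI hFne : F.NeBot := iInf_neBot_of_directed hdir hne
  have hmemF : ∀ s : Set K, s ∈ F ↔ ∃ p : A × B, s ∈ f p :=
    fun s => mem_iInf_of_directed hdir s
  -- F is Cauchy
  have hCauchy : ∀ c : K, 0 < c → ∃ t ∈ F, ∀ a ∈ t, ∀ b ∈ t, ∀ n : ℕ,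
      (n : K) * |a - b| < c := by
    intro c hc
    have hc' : 0 < c / x0 := div_pos hc hx0pos
    obtain ⟨a, ha, b, hb, hab⟩ := hnormal (c / x0) hc'
    refine ⟨Icc a b, (hmemF _).2 ⟨⟨⟨a, ha⟩, ⟨b, hb⟩⟩, mem_principal_self _⟩, ?_⟩
    rintro y ⟨hya, hyb⟩ z ⟨hza, hzb⟩ n
    have hba : 0 < b - a := sub_pos.2 (hlt a ha b hb)
    have h1 : |y - z| ≤ b - a := by
      rw [abs_sub_le_iff]
      constructor <;> linarith
    calc (n : K) * |y - z| ≤ (n : K) * (b - a) :=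
          mul_le_mul_of_nonneg_left h1 (Nat.cast_nonneg n)
      _ < x0 * (b - a) := mul_lt_mul_of_pos_right (hx0 n) hba
      _ < x0 * (c / x0) := mul_lt_mul_of_pos_left hab hx0pos
      _ = c := mul_div_cancel₀ c (ne_of_gt hx0pos)
  obtain ⟨x, hx⟩ := hComplete F hFne hCauchy
  -- x is an upper bound of A
  have hxA : ∀ a ∈ A, a ≤ x := by
    intro a ha
    by_contra h
    push_neg at h
    have hc : 0 < a - x := sub_pos.2 h
    obtain ⟨⟨⟨a', ha'⟩, ⟨b', hb'⟩⟩, hsub⟩ := (hmemF _).1 (hx (a - x) hc)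
    rw [mem_principal] at hsub
    have hmax : max a a' ∈ A := by
      rcases le_total a a' with hh | hh
      · simpa [max_eq_right hh] using ha'
      · simpa [max_eq_left hh] using ha
    have hIcc : max a a' ∈ Icc a' b' :=
      ⟨le_max_right _ _, (hlt _ hmax b' hb').le⟩
    have hS := hsub hIcc 1
    simp only [Nat.cast_one, one_mul, Set.mem_setOf_eq] at hS
    have : a - x ≤ |x - max a a'| := by
      rw [abs_sub_comm]
      calc a - x ≤ max a a' - x := by
            have := le_max_left a a'; linarith
        _ ≤ |max a a' - x| := le_abs_self _
    linarith
  -- x is a lower bound of B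
  have hxB : ∀ b ∈ B, x ≤ b := by
    intro b hb
    by_contra h
    push_neg at h
    have hc : 0 < x - b := sub_pos.2 h
    obtain ⟨⟨⟨a', ha'⟩, ⟨b', hb'⟩⟩, hsub⟩ := (hmemF _).1 (hx (x - b) hc)
    rw [mem_principal] at hsub
    have hmin : min b b' ∈ B := by
      rcases le_total b b' with hh | hh
      · simpa [min_eq_left hh] using hb
      · simpa [min_eq_right hh] using hb'
    have hIcc : min b b' ∈ Icc a' b' :=
      ⟨(hlt a' ha' _ hmin).le, min_le_right _ _⟩
    have hS := hsub hIcc 1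
    simp only [Nat.cast_one, one_mul, Set.mem_setOf_eq] at hS
    have : x - b ≤ |x - min b b'| := by
      calc x - b ≤ x - min b b' := by
            have := min_le_left b b'; linarith
        _ ≤ |x - min b b'| := le_abs_self _
    linarith
  rcases hmem x with h | h
  · exact Or.inl ⟨x, h, hxA⟩
  · exact Or.inr ⟨x, h, hxB⟩
end

section
/- Let ℝ_{ℵ₀}((ℚ)) = {a ∈ ℝ((ℚ)) : supp(a) is finite, or supp(a) is cofinal in ℚ of order type ω}, a subfield of the Hahn series field ℝ((ℚ)), ordered by the lexicographic order (a > 0 iff its coefficient at γ = min supp(a) is positive). Then ℝ_{ℵ₀}((ℚ)) is continuously closed: every normal cut of the ordered field ℝ_{ℵ₀}((ℚ)) is principal. -/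
/-- The subfield `ℝ_{ℵ₀}((ℚ))` of the Hahn series field `ℝ((ℚ))`: series whose support
is finite or cofinal in `ℚ` of order type `ω`. -/
def RAlephZero : Set (HahnSeries ℚ ℝ) :=
  {a : HahnSeries ℚ ℝ | a.support.Finite ∨
    ((∀ q : ℚ, ∃ r ∈ a.support, q ≤ r) ∧ Nonempty (a.support ≃o ℕ))}

/-- The lexicographic positivity of a Hahn series: `a > 0` iff the coefficient at
`min supp(a)` is positive. -/
def HSPos (a : HahnSeries ℚ ℝ) : Prop := a ≠ 0 ∧ 0 < a.coeff a.order

/-- The lexicographic strict order on Hahn series: `a < b` iff `b − a` is positive. -/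
def HSLt (a b : HahnSeries ℚ ℝ) : Prop := HSPos (b - a)

/-- The lexicographic order on Hahn series. -/
def HSLe (a b : HahnSeries ℚ ℝ) : Prop := a = b ∨ HSLt a b

/-- If all coefficients below `m` vanish and the coefficient at `m` is positive, the series
is lex-positive with order `m`. -/
lemma hs_pos_of_coeff {z : HahnSeries ℚ ℝ} {m : ℚ} (h0 : ∀ s, s < m → z.coeff s = 0)
    (hm : 0 < z.coeff m) : HSPos z ∧ z.order = m := by
  have hz : z ≠ 0 := HahnSeries.ne_zero_of_coeff_ne_zero hm.ne'
  have h1 : z.order ≤ m := HahnSeries.order_le_of_coeff_ne_zero hm.ne'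
  have h2 : ¬ z.order < m := fun h => (HahnSeries.coeff_order_eq_zero.not.2 hz) (h0 _ h)
  have he : z.order = m := le_antisymm h1 (not_lt.1 h2)
  exact ⟨⟨hz, he ▸ hm⟩, he⟩

/-- Sum of lex-positive series is lex-positive, with order the min of the orders. -/
lemma hs_pos_add {x y : HahnSeries ℚ ℝ} (hx : HSPos x) (hy : HSPos y) :
    HSPos (x + y) ∧ (x + y).order = min x.order y.order := by
  apply hs_pos_of_coeff
  · intro s hs
    rw [lt_min_iff] at hs
    rw [HahnSeries.coeff_add, HahnSeries.coeff_eq_zero_of_lt_order hs.1,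
      HahnSeries.coeff_eq_zero_of_lt_order hs.2, add_zero]
  · rw [HahnSeries.coeff_add]
    rcases lt_trichotomy x.order y.order with h | h | h
    · rw [min_eq_left h.le, HahnSeries.coeff_eq_zero_of_lt_order h, add_zero]; exact hx.2
    · rw [min_eq_left h.le, h]
      exact add_pos (h ▸ hx.2) hy.2
    · rw [min_eq_right h.le, HahnSeries.coeff_eq_zero_of_lt_order h, zero_add]; exact hy.2

lemma hs_not_pos_neg {z : HahnSeries ℚ ℝ} (h : HSPos z) (h' : HSPos (-z)) : False := by
  have := (hs_pos_add h h').1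
  rw [add_neg_cancel] at this
  exact this.1 rfl

lemma hs_trichot {z : HahnSeries ℚ ℝ} (h : z ≠ 0) : HSPos z ∨ HSPos (-z) := by
  rcases (Ne.lt_or_gt (HahnSeries.coeff_order_eq_zero.not.2 h)) with hneg | hpos
  · right
    refine (hs_pos_of_coeff (m := z.order) (fun s hs => ?_) ?_).1
    · rw [HahnSeries.coeff_neg, HahnSeries.coeff_eq_zero_of_lt_order hs, neg_zero]
    · rw [HahnSeries.coeff_neg]; linarith
  · exact Or.inl ⟨h, hpos⟩

lemma hs_pos_single (q : ℚ) : HSPos (HahnSeries.single q (1 : ℝ)) ∧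
    (HahnSeries.single q (1 : ℝ)).order = q :=
  hs_pos_of_coeff (fun s hs => HahnSeries.coeff_single_of_ne hs.ne)
    (by rw [HahnSeries.coeff_single_same]; norm_num)

lemma hs_single_mem (q : ℚ) : HahnSeries.single q (1 : ℝ) ∈ RAlephZero :=
  Or.inl ((Set.finite_singleton q).subset HahnSeries.support_single_subset)

lemma hs_lt_single_mono {q m : ℚ} (h : m ≤ q) {z : HahnSeries ℚ ℝ}
    (hz : HSLt z (HahnSeries.single q 1)) : HSLt z (HahnSeries.single m 1) := by
  rcases eq_or_lt_of_le h with rfl | hlt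
  · exact hz
  · have h1 : HSPos (HahnSeries.single m 1 - HahnSeries.single q 1) := by
      refine (hs_pos_of_coeff (m := m) (fun s hs => ?_) ?_).1
      · rw [HahnSeries.coeff_sub, HahnSeries.coeff_single_of_ne hs.ne,
          HahnSeries.coeff_single_of_ne (hs.trans hlt).ne, sub_zero]
      · rw [HahnSeries.coeff_sub, HahnSeries.coeff_single_same,
          HahnSeries.coeff_single_of_ne hlt.ne]; norm_num
    have h2 := (hs_pos_add h1 hz).1
    have heq : HahnSeries.single m 1 - HahnSeries.single q 1 +
        (HahnSeries.single q 1 - z) = HahnSeries.single m (1 : ℝ) - z := by ring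
    rw [heq] at h2
    exact h2

/-- If `-x^q < d < x^q` lexicographically then all coefficients of `d` below `q` vanish. -/
lemma hs_coeff_small {q : ℚ} {d : HahnSeries ℚ ℝ}
    (h1 : HSPos (HahnSeries.single q 1 - d)) (h2 : HSPos (HahnSeries.single q 1 + d)) :
    ∀ r, r < q → d.coeff r = 0 := by
  by_contra hcon
  push_neg at hcon
  obtain ⟨r, hrq, hr⟩ := hcon
  have hSwf : {r ∈ d.support | r < q}.IsWF := d.isWF_support.mono (Set.sep_subset _ _)
  have hSne : {r ∈ d.support | r < q}.Nonempty := ⟨r, hr, hrq⟩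
  set r0 := hSwf.min hSne with hr0def
  have hr0 : r0 ∈ {r ∈ d.support | r < q} := hSwf.min_mem hSne
  have hzero : ∀ s, s < r0 → d.coeff s = 0 := by
    intro s hs
    by_contra hds
    exact hSwf.not_lt_min hSne ⟨hds, hs.trans hr0.2⟩ hs
  have hsingle0 : ∀ s, s < r0 → (HahnSeries.single q (1 : ℝ)).coeff s = 0 :=
    fun s hs => HahnSeries.coeff_single_of_ne (hs.trans hr0.2).ne
  rcases hr0.1.lt_or_gt with hneg | hpos
  · -- d.coeff r0 < 0 : then single q 1 + d is lex-negative
    refine hs_not_pos_neg h2 (hs_pos_of_coeff (m := r0) (fun s hs => ?_) ?_).1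
    · rw [HahnSeries.coeff_neg, HahnSeries.coeff_add, hzero s hs, hsingle0 s hs]; ring
    · rw [HahnSeries.coeff_neg, HahnSeries.coeff_add,
        HahnSeries.coeff_single_of_ne hr0.2.ne]
      linarith
  · -- d.coeff r0 > 0 : then single q 1 - d is lex-negative
    refine hs_not_pos_neg h1 (hs_pos_of_coeff (m := r0) (fun s hs => ?_) ?_).1
    · rw [HahnSeries.coeff_neg, HahnSeries.coeff_sub, hzero s hs, hsingle0 s hs]; ring
    · rw [HahnSeries.coeff_neg, HahnSeries.coeff_sub,
        HahnSeries.coeff_single_of_ne hr0.2.ne]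
      linarith

/-- Main contradiction lemma: a sum of two lex-positive series cannot have all coefficients
vanishing below `dd.order + 1`. -/
lemma hs_contra {dd u e : HahnSeries ℚ ℝ} (he : e = dd + u) (h1 : HSPos dd)
    (h2 : HSPos u) (h0 : ∀ r, r < dd.order + 1 → e.coeff r = 0) : False := by
  subst he
  obtain ⟨hp, ho⟩ := hs_pos_add h1 h2
  have hlt : (dd + u).order < dd.order + 1 := by
    rw [ho]; exact lt_of_le_of_lt (min_le_left _ _) (lt_add_one _)
  have hv := hp.2
  rw [h0 _ hlt] at hv
  exact lt_irrefl _ hv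

/-- Elements of `RAlephZero` have finite bounded initial segments of support. -/
lemma hs_initFinite {a : HahnSeries ℚ ℝ} (ha : a ∈ RAlephZero) (q : ℚ) :
    {r ∈ a.support | r < q}.Finite := by
  rcases ha with hfin | ⟨hcof, ⟨e⟩⟩
  · exact hfin.subset (Set.sep_subset _ _)
  · obtain ⟨r, hr, hqr⟩ := hcof q
    have hT : {x : a.support | (x : ℚ) < q}.Finite := by
      have hsub : {x : a.support | (x : ℚ) < q} ⊆ e ⁻¹' (Set.Iio (e ⟨r, hr⟩)) := by
        intro x hx
        simp only [Set.mem_preimage, Set.mem_Iio]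
        exact e.lt_iff_lt.2 (Subtype.coe_lt_coe.1 (lt_of_lt_of_le hx hqr))
      exact ((Set.finite_Iio _).preimage e.injective.injOn).subset hsub
    have heq : {r ∈ a.support | r < q} = Subtype.val '' {x : a.support | (x : ℚ) < q} := by
      ext s
      constructor
      · rintro ⟨hs, hsq⟩; exact ⟨⟨s, hs⟩, hsq, rfl⟩
      · rintro ⟨⟨s, hs⟩, hsq, rfl⟩; exact ⟨hs, hsq⟩
    rw [heq]
    exact hT.image _

/-- An infinite well-founded set of rationals with finite bounded initial segments has
order type `ω`. -/
lemma hs_omegaIso {S : Set ℚ} (hwf : S.IsWF) (hinf : S.Infinite)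
    (hfin : ∀ q : ℚ, {r ∈ S | r < q}.Finite) : Nonempty (S ≃o ℕ) := by
  classical
  set e : S → ℕ := fun s => ({r ∈ S | r < (s : ℚ)}).ncard with he
  have hmono : StrictMono e := by
    intro s t hst
    apply Set.ncard_lt_ncard _ (hfin _)
    constructor
    · rintro r ⟨hr, hrs⟩; exact ⟨hr, hrs.trans (Subtype.coe_lt_coe.2 hst)⟩
    · intro hsub
      have hmem : (s : ℚ) ∈ {r ∈ S | r < (s : ℚ)} := hsub ⟨s.2, Subtype.coe_lt_coe.2 hst⟩
      exact absurd hmem.2 (lt_irrefl _)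
  have hsurj : Function.Surjective e := by
    intro n
    induction n with
    | zero =>
      have hne : S.Nonempty := hinf.nonempty
      refine ⟨⟨hwf.min hne, hwf.min_mem hne⟩, ?_⟩
      have hempty : {r ∈ S | r < hwf.min hne} = ∅ := by
        ext r
        simp only [Set.mem_sep_iff, Set.mem_empty_iff_false, iff_false, not_and]
        exact fun hr hlt => hwf.not_lt_min hne hr hlt
      show ({r ∈ S | r < (hwf.min hne : ℚ)}).ncard = 0
      rw [hempty, Set.ncard_empty]
    | succ n ih =>
      obtain ⟨s, hs⟩ := ih
      have hTne : {r ∈ S | (s : ℚ) < r}.Nonempty := by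
        by_contra hcon
        rw [Set.not_nonempty_iff_eq_empty] at hcon
        apply hinf
        have hsub : S ⊆ insert (s : ℚ) {r ∈ S | r < (s : ℚ)} := by
          intro r hr
          rcases lt_trichotomy r (s : ℚ) with h1 | h1 | h1
          · exact Or.inr ⟨hr, h1⟩
          · exact Or.inl h1
          · exact absurd (Set.mem_sep hr h1) (by rw [hcon]; exact Set.notMem_empty r)
        exact (((hfin _).insert _).subset hsub)
      have hTwf : {r ∈ S | (s : ℚ) < r}.IsWF := hwf.mono (Set.sep_subset _ _)
      set t0 := hTwf.min hTne with ht0def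
      have ht0 : t0 ∈ S ∧ (s : ℚ) < t0 := hTwf.min_mem hTne
      refine ⟨⟨t0, ht0.1⟩, ?_⟩
      have hset : {r ∈ S | r < t0} = insert (s : ℚ) {r ∈ S | r < (s : ℚ)} := by
        ext r
        simp only [Set.mem_insert_iff, Set.mem_sep_iff]
        constructor
        · rintro ⟨hr, hrt⟩
          rcases lt_trichotomy r (s : ℚ) with h1 | h1 | h1
          · exact Or.inr ⟨hr, h1⟩
          · exact Or.inl h1
          · exact absurd hrt (hTwf.not_lt_min hTne ⟨hr, h1⟩)
        · rintro (rfl | ⟨hr, hrs⟩)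
          · exact ⟨s.2, ht0.2⟩
          · exact ⟨hr, hrs.trans ht0.2⟩
      have hsn : ({r ∈ S | r < (s : ℚ)}).ncard = n := hs
      show ({r ∈ S | r < (t0 : ℚ)}).ncard = n + 1
      rw [hset, Set.ncard_insert_of_notMem (fun h => lt_irrefl _ h.2) (hfin _), hsn]
  exact ⟨StrictMono.orderIsoOfSurjective e hmono hsurj⟩

/-- the ordered field `ℝ_{ℵ₀}((ℚ))` (with the lexicographic order) is
continuously closed: every normal cut of it is principal. -/
theorem RAlephZero_continuously_closed
    -- (A,B) is a proper cut of `ℝ_{ℵ₀}((ℚ))`: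
    (A B : Set (HahnSeries ℚ ℝ))
    (hcut : A ∪ B = RAlephZero) (hdisj : A ∩ B = ∅)
    (hlt : ∀ a ∈ A, ∀ b ∈ B, HSLt a b)
    (hA : A.Nonempty) (hB : B.Nonempty)
    -- the cut is normal:
    (hnormal : ∀ c ∈ RAlephZero, HSPos c → ∃ a ∈ A, ∃ b ∈ B, HSLt (b - a) c) :
    -- the cut is principal:
    (∃ m ∈ A, ∀ a ∈ A, HSLe a m) ∨ (∃ m ∈ B, ∀ b ∈ B, HSLe m b) := by
  classical
  have hsubA : A ⊆ RAlephZero := fun a ha => hcut ▸ (Set.mem_union_left B ha)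
  have hex : ∀ q : ℚ, ∃ a ∈ A, ∃ b ∈ B, HSLt (b - a) (HahnSeries.single q 1) :=
    fun q => hnormal _ (hs_single_mem q) (hs_pos_single q).1
  choose aa haa bb hbb hsm using hex
  have hgood : ∀ q m : ℚ, m ≤ q → HSLt (bb q - aa q) (HahnSeries.single m 1) :=
    fun q m h => hs_lt_single_mono h (hsm q)
  -- consistency of approximants
  have hcons : ∀ q q' r : ℚ, r < q → r < q' → (aa q).coeff r = (aa q').coeff r := by
    intro q q' r h1 h2
    have hg1 := hgood q (min q q') (min_le_left _ _)
    have hg2 := hgood q' (min q q') (min_le_right _ _)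
    have hp1 : HSPos (HahnSeries.single (min q q') 1 - (aa q' - aa q)) := by
      have hx := (hs_pos_add hg1 (hlt _ (haa q') _ (hbb q))).1
      have heq : HahnSeries.single (min q q') (1 : ℝ) - (bb q - aa q) + (bb q - aa q')
          = HahnSeries.single (min q q') 1 - (aa q' - aa q) := by ring
      rwa [heq] at hx
    have hp2 : HSPos (HahnSeries.single (min q q') 1 + (aa q' - aa q)) := by
      have hx := (hs_pos_add hg2 (hlt _ (haa q) _ (hbb q'))).1
      have heq : HahnSeries.single (min q q') (1 : ℝ) - (bb q' - aa q') + (bb q' - aa q)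
          = HahnSeries.single (min q q') 1 + (aa q' - aa q) := by ring
      rwa [heq] at hx
    have hz := hs_coeff_small hp1 hp2 r (lt_min h1 h2)
    rw [HahnSeries.coeff_sub] at hz
    linarith
  -- the limit series
  set f : ℚ → ℝ := fun r => (aa (r + 1)).coeff r with hf
  have hfc : ∀ q r : ℚ, r < q → f r = (aa q).coeff r :=
    fun q r h => hcons (r + 1) q r (lt_add_one r) h
  have hsupp : ∀ q : ℚ, ∀ r, f r ≠ 0 → r < q → r ∈ (aa q).support := by
    intro q r h1 h2
    rw [HahnSeries.mem_support]
    rw [hfc q r h2] at h1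
    exact h1
  have hwf : (Function.support f).IsWF := by
    rw [Set.isWF_iff_no_descending_seq]
    intro g hg hmem
    have hbound : ∀ n, g n < g 0 + 1 :=
      fun n => lt_of_le_of_lt (hg.antitone (Nat.zero_le n)) (lt_add_one _)
    have hmem2 : ∀ n, g (OrderDual.toDual n) ∈ (aa (g 0 + 1)).support :=
      fun n => hsupp _ _ (hmem n) (hbound n)
    exact (Set.isWF_iff_no_descending_seq.1 (aa (g 0 + 1)).isWF_support) g hg hmem2
  set c : HahnSeries ℚ ℝ := ⟨f, hwf.isPWO⟩ with hcdef
  have hcc : ∀ q r : ℚ, r < q → c.coeff r = (aa q).coeff r := hfc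
  have hcsupp : ∀ q : ℚ, ∀ r, r ∈ c.support → r < q → r ∈ (aa q).support :=
    fun q r h1 h2 => hsupp q r h1 h2
  have hcfin : ∀ q : ℚ, {r ∈ c.support | r < q}.Finite := by
    intro q
    apply (hs_initFinite (hsubA (haa q)) q).subset
    rintro r ⟨h1, h2⟩
    exact ⟨hcsupp q r h1 h2, h2⟩
  have hcmem : c ∈ RAlephZero := by
    by_cases hfin : c.support.Finite
    · exact Or.inl hfin
    · right
      have hinf : c.support.Infinite := hfin
      constructor
      · intro q
        by_contra hcon
        push_neg at hcon
        apply hfin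
        apply (hcfin q).subset
        intro r hr
        exact ⟨hr, hcon r hr⟩
      · exact hs_omegaIso c.isWF_support hinf hcfin
  have hcAB : c ∈ A ∪ B := by rw [hcut]; exact hcmem
  rcases hcAB with hcA | hcB
  · left
    refine ⟨c, hcA, fun a haA => ?_⟩
    by_cases hac : a = c
    · exact Or.inl hac
    · right
      have hne : a - c ≠ 0 := sub_ne_zero.2 hac
      rcases hs_trichot hne with hpos | hneg
      · exfalso
        refine hs_contra (dd := a - c) (u := bb ((a - c).order + 1) - a)
          (e := bb ((a - c).order + 1) - c) (by ring) hpos (hlt a haA _ (hbb _)) ?_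
        intro r hr
        have h1 : (bb ((a - c).order + 1) - aa ((a - c).order + 1)).coeff r = 0 :=
          hs_coeff_small (hsm _)
            (hs_pos_add (hs_pos_single _).1 (hlt _ (haa _) _ (hbb _))).1 r hr
        have h2 : c.coeff r = (aa ((a - c).order + 1)).coeff r := hcc _ r hr
        rw [HahnSeries.coeff_sub] at h1 ⊢
        rw [h2]
        linarith
      · rw [neg_sub] at hneg
        exact hneg
  · right
    refine ⟨c, hcB, fun b hbB' => ?_⟩
    by_cases hbc : c = b
    · exact Or.inl hbc
    · right
      have hne : c - b ≠ 0 := sub_ne_zero.2 hbc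
      rcases hs_trichot hne with hpos | hneg
      · exfalso
        refine hs_contra (dd := c - b) (u := b - aa ((c - b).order + 1))
          (e := c - aa ((c - b).order + 1)) (by ring) hpos (hlt _ (haa _) b hbB') ?_
        intro r hr
        rw [HahnSeries.coeff_sub, hcc _ r hr, sub_self]
      · rw [neg_sub] at hneg
        exact hneg
end

section
/- Let R be a real closed field containing ℝ and an element x transcendental over ℝ such that R is algebraic over the subfield ℝ(x) (i.e. R is a real closure of the rational function field ℝ(X)). Then the space M(R(Y)) of ℝ-places of the rational function field R(Y), equipped with the quotient topology induced from the Harrison topology on the space of orderings of R(Y), is not metrizable. -/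
attribute [local instance] Classical.propDecidable

/-- The space of orderings of `K` with the Harrison topology. -/
def OrderSpace (K : Type*) [Field K] : Type _ := {P : Set K // IsOrdering P}

instance (K : Type*) [Field K] : TopologicalSpace (OrderSpace K) :=
  TopologicalSpace.generateFrom
    {s : Set (OrderSpace K) | ∃ a : K, a ≠ 0 ∧ s = {P : OrderSpace K | a ∈ P.1}}

/-- The space `M(K)` of ℝ-places of `K`. -/
def PlaceSpace (K : Type*) [Field K] : Type _ :=
  {φ : K → WithTop ℝ // ∃ P : Set K, IsOrdering P ∧ φ = rPlace P}

/-- The canonical surjection `λ : X(K) → M(K)`, `P ↦ λ_P`. -/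
noncomputable def lambdaMap (K : Type*) [Field K] : OrderSpace K → PlaceSpace K :=
  fun P => ⟨rPlace P.1, P.1, P.2, rfl⟩

/-- `M(K)` carries the quotient topology induced by `λ`. -/
noncomputable instance (K : Type*) [Field K] : TopologicalSpace (PlaceSpace K) :=
  TopologicalSpace.coinduced (lambdaMap K) inferInstance

namespace IsOrdering

variable {K : Type*} [Field K] {P : Set K}

theorem add_mem (h : IsOrdering P) {a b : K} (ha : a ∈ P) (hb : b ∈ P) : a + b ∈ P :=
  h.1 a ha b hb

theorem mul_mem (h : IsOrdering P) {a b : K} (ha : a ∈ P) (hb : b ∈ P) : a * b ∈ P :=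
  h.2.1 a ha b hb

theorem total (h : IsOrdering P) (a : K) : a ∈ P ∨ -a ∈ P := h.2.2.1 a

theorem eq_zero (h : IsOrdering P) {a : K} (ha : a ∈ P) (hb : -a ∈ P) : a = 0 :=
  h.2.2.2 a ha hb

theorem zero_mem (h : IsOrdering P) : (0 : K) ∈ P := by
  rcases h.total 0 with h0 | h0 <;> simpa using h0

theorem sq_mem (h : IsOrdering P) (a : K) : a * a ∈ P := by
  rcases h.total a with ha | ha
  · exact h.mul_mem ha ha
  · simpa using h.mul_mem ha ha

theorem one_mem (h : IsOrdering P) : (1 : K) ∈ P := by simpa using h.sq_mem 1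

theorem inv_mem (h : IsOrdering P) {a : K} (ha : a ∈ P) : a⁻¹ ∈ P := by
  by_cases h0 : a = 0
  · simpa [h0] using h.zero_mem
  · have : a⁻¹ = a * (a⁻¹ * a⁻¹) := by field_simp
    rw [this]; exact h.mul_mem ha (h.sq_mem _)

theorem natCast_mem (h : IsOrdering P) (n : ℕ) : (n : K) ∈ P := by
  induction n with
  | zero => simpa using h.zero_mem
  | succ n ih => push_cast; exact h.add_mem ih h.one_mem

theorem ratCast_mem (h : IsOrdering P) {q : ℚ} (hq : 0 ≤ q) : (q : K) ∈ P := by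
  rw [Rat.cast_def, div_eq_mul_inv]
  have hnum : ((q.num : K)) ∈ P := by
    obtain ⟨n, hn⟩ := Int.eq_ofNat_of_zero_le (Rat.num_nonneg.mpr hq)
    rw [hn]; push_cast; exact h.natCast_mem n
  exact h.mul_mem hnum (h.inv_mem (by exact_mod_cast h.natCast_mem q.den))

theorem neg_mem_of_not_mem (h : IsOrdering P) {a : K} (ha : a ∉ P) : -a ∈ P := by
  rcases h.total a with h' | h'
  · exact absurd h' ha
  · exact h'

end IsOrdering


section Compactness

variable {K : Type*} [Field K]

theorem isOpen_orderSpace_mem (a : K) : IsOpen {P : OrderSpace K | a ∈ P.1} := by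
  by_cases ha : a = 0
  · have : {P : OrderSpace K | a ∈ P.1} = Set.univ := by
      ext P; simpa [ha] using P.2.zero_mem
    rw [this]; exact isOpen_univ
  · exact TopologicalSpace.GenerateOpen.basic _ ⟨a, ha, rfl⟩

theorem not_mem_iff_neg_mem {P : Set K} (h : IsOrdering P) {a : K} (ha : a ≠ 0) :
    a ∉ P ↔ -a ∈ P := by
  constructor
  · exact h.neg_mem_of_not_mem
  · intro hn hm
    exact ha (h.eq_zero hm hn)

noncomputable def ordEmb : OrderSpace K → (K → Bool) := fun P a => decide (a ∈ P.1)

theorem ordEmb_eq_true {P : OrderSpace K} {a : K} : ordEmb P a = true ↔ a ∈ P.1 := by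
  simp [ordEmb]

theorem ordEmb_eq_false {P : OrderSpace K} {a : K} : ordEmb P a = false ↔ a ∉ P.1 := by
  simp [ordEmb]

theorem continuous_ordEmb : Continuous (ordEmb : OrderSpace K → K → Bool) := by
  apply continuous_pi; intro a
  rw [continuous_discrete_rng]
  intro b
  cases b
  · by_cases ha : a = 0
    · have : (fun P : OrderSpace K => ordEmb P a) ⁻¹' {false} = ∅ := by
        ext P
        simp only [Set.mem_preimage, Set.mem_singleton_iff, Set.mem_empty_iff_false,
          iff_false, ordEmb_eq_false, not_not, ha]
        exact P.2.zero_mem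
      rw [this]; exact isOpen_empty
    · have : (fun P : OrderSpace K => ordEmb P a) ⁻¹' {false} =
          {P : OrderSpace K | -a ∈ P.1} := by
        ext P
        simp only [Set.mem_preimage, Set.mem_singleton_iff, Set.mem_setOf_eq,
          ordEmb_eq_false]
        exact not_mem_iff_neg_mem P.2 ha
      rw [this]; exact isOpen_orderSpace_mem _
  · have : (fun P : OrderSpace K => ordEmb P a) ⁻¹' {true} = {P : OrderSpace K | a ∈ P.1} := by
      ext P; simp [ordEmb]
    rw [this]; exact isOpen_orderSpace_mem a

theorem isInducing_ordEmb : Topology.IsInducing (ordEmb : OrderSpace K → K → Bool) := by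
  constructor
  refine le_antisymm (continuous_iff_le_induced.mp continuous_ordEmb) ?_
  apply le_generateFrom
  rintro s ⟨a, ha, rfl⟩
  refine isOpen_induced_iff.mpr ⟨(fun f : K → Bool => f a) ⁻¹' {true}, ?_, ?_⟩
  · exact IsOpen.preimage (continuous_apply a) (isOpen_discrete ({true} : Set Bool))
  · ext P; simp [ordEmb]

theorem injective_ordEmb : Function.Injective (ordEmb : OrderSpace K → K → Bool) := by
  intro P Q h
  apply Subtype.ext
  ext a
  have := congrFun h a
  simp only [ordEmb, decide_eq_decide] at this
  exact this

theorem isClosed_range_ordEmb : IsClosed (Set.range (ordEmb : OrderSpace K → K → Bool)) := by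
  have hrange : Set.range (ordEmb : OrderSpace K → K → Bool) =
      (⋂ (x : K), ⋂ (y : K), {f : K → Bool | f x = true → f y = true → f (x + y) = true}) ∩
      ((⋂ (x : K), ⋂ (y : K), {f : K → Bool | f x = true → f y = true → f (x * y) = true}) ∩
      ((⋂ (x : K), {f : K → Bool | f x = true ∨ f (-x) = true}) ∩
      (⋂ (x : K), {f : K → Bool | f x = true → f (-x) = true → x = 0}))) := by
    ext f
    simp only [Set.mem_range, Set.mem_inter_iff, Set.mem_iInter, Set.mem_setOf_eq]
    constructor
    · rintro ⟨P, rfl⟩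
      refine ⟨fun x y hx hy => ?_, fun x y hx hy => ?_, fun x => ?_, fun x hx hy => ?_⟩
      · exact ordEmb_eq_true.mpr (P.2.add_mem (ordEmb_eq_true.mp hx) (ordEmb_eq_true.mp hy))
      · exact ordEmb_eq_true.mpr (P.2.mul_mem (ordEmb_eq_true.mp hx) (ordEmb_eq_true.mp hy))
      · rcases P.2.total x with h | h
        · exact Or.inl (ordEmb_eq_true.mpr h)
        · exact Or.inr (ordEmb_eq_true.mpr h)
      · exact P.2.eq_zero (ordEmb_eq_true.mp hx) (ordEmb_eq_true.mp hy)
    · rintro ⟨h1, h2, h3, h4⟩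
      refine ⟨⟨{a : K | f a = true}, ?_, ?_, ?_, ?_⟩, ?_⟩
      · exact fun x hx y hy => h1 x y hx hy
      · exact fun x hx y hy => h2 x y hx hy
      · exact h3
      · exact h4
      · funext a
        simp only [ordEmb, Set.mem_setOf_eq]
        by_cases hfa : f a = true
        · simp [hfa]
        · rw [Bool.not_eq_true] at hfa; simp [hfa]
  rw [hrange]
  have hev : ∀ (x : K) (b : Bool), IsClosed {f : K → Bool | f x = b} := by
    intro x b
    have : {f : K → Bool | f x = b} = (fun f : K → Bool => f x) ⁻¹' {b} := rfl
    rw [this]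
    exact IsClosed.preimage (continuous_apply x) (isClosed_discrete ({b} : Set Bool))
  have hevo : ∀ (x : K) (b : Bool), IsOpen {f : K → Bool | f x = b} := by
    intro x b
    have : {f : K → Bool | f x = b} = (fun f : K → Bool => f x) ⁻¹' {b} := rfl
    rw [this]
    exact IsOpen.preimage (continuous_apply x) (isOpen_discrete ({b} : Set Bool))
  have himp : ∀ (s t : Set (K → Bool)), IsOpen s → IsClosed t →
      IsClosed {f | f ∈ s → f ∈ t} := by
    intro s t hs ht
    have : {f : K → Bool | f ∈ s → f ∈ t} = sᶜ ∪ t := by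
      ext f; by_cases hf : f ∈ s <;> simp [hf]
    rw [this]; exact hs.isClosed_compl.union ht
  refine IsClosed.inter ?_ (IsClosed.inter ?_ (IsClosed.inter ?_ ?_))
  · exact isClosed_iInter fun x => isClosed_iInter fun y =>
      himp _ _ (hevo x true) (himp _ _ (hevo y true) (hev (x + y) true))
  · exact isClosed_iInter fun x => isClosed_iInter fun y =>
      himp _ _ (hevo x true) (himp _ _ (hevo y true) (hev (x * y) true))
  · exact isClosed_iInter fun x => (hev x true).union (hev (-x) true)
  · refine isClosed_iInter fun x => ?_
    by_cases hx : x = 0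
    · have : {f : K → Bool | f x = true → f (-x) = true → x = 0} = Set.univ := by
        ext f; simp [hx]
      rw [this]; exact isClosed_univ
    · have : {f : K → Bool | f x = true → f (-x) = true → x = 0} =
          {f : K → Bool | f x = true}ᶜ ∪ {f : K → Bool | f (-x) = true}ᶜ := by
        ext f
        by_cases h1 : f x = true <;> by_cases h2 : f (-x) = true <;> simp [h1, h2, hx]
      rw [this]
      exact ((hevo x true).isClosed_compl).union ((hevo (-x) true).isClosed_compl)

instance : CompactSpace (OrderSpace K) := by
  rw [← isCompact_univ_iff]
  rw [isInducing_ordEmb.isCompact_iff]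
  rw [Set.image_univ]
  exact isClosed_range_ordEmb.isCompact

end Compactness


section TrailingOrdering

open Polynomial

variable {R : Type*} [Field R] [LinearOrder R] [IsStrictOrderedRing R]

theorem trailingCoeff_neg' (p : R[X]) : (-p).trailingCoeff = -p.trailingCoeff := by
  rw [trailingCoeff, trailingCoeff, natTrailingDegree_neg, coeff_neg]

theorem trailing_add_nonneg {A B : R[X]} (hA : 0 ≤ A.trailingCoeff)
    (hB : 0 ≤ B.trailingCoeff) : 0 ≤ (A + B).trailingCoeff := by
  by_cases hA0 : A = 0
  · simpa [hA0] using hB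
  by_cases hB0 : B = 0
  · simpa [hB0] using hA
  have hAp : 0 < A.trailingCoeff :=
    lt_of_le_of_ne hA (Ne.symm (mt trailingCoeff_eq_zero.mp hA0))
  have hBp : 0 < B.trailingCoeff :=
    lt_of_le_of_ne hB (Ne.symm (mt trailingCoeff_eq_zero.mp hB0))
  set m := min A.natTrailingDegree B.natTrailingDegree with hm
  have hlow : ∀ k < m, (A + B).coeff k = 0 := by
    intro k hk
    rw [coeff_add, coeff_eq_zero_of_lt_natTrailingDegree (lt_of_lt_of_le hk (min_le_left _ _)),
      coeff_eq_zero_of_lt_natTrailingDegree (lt_of_lt_of_le hk (min_le_right _ _)), add_zero]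
  have hpos : 0 < (A + B).coeff m := by
    rcases lt_trichotomy A.natTrailingDegree B.natTrailingDegree with h | h | h
    · have hmA : m = A.natTrailingDegree := min_eq_left h.le
      have hB' : B.coeff m = 0 := coeff_eq_zero_of_lt_natTrailingDegree (by rw [hmA]; exact h)
      rw [coeff_add, hB', add_zero, hmA]
      exact hAp
    · have hmA : m = A.natTrailingDegree := min_eq_left h.le
      have h1 : A.coeff m = A.trailingCoeff := by rw [hmA]; rfl
      have h2 : B.coeff m = B.trailingCoeff := by rw [hmA, h]; rfl
      rw [coeff_add, h1, h2]
      positivity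
    · have hmB : m = B.natTrailingDegree := min_eq_right h.le
      have hA' : A.coeff m = 0 := coeff_eq_zero_of_lt_natTrailingDegree (by rw [hmB]; exact h)
      rw [coeff_add, hA', zero_add, hmB]
      exact hBp
  have hne : A + B ≠ 0 := fun h => by simp [h] at hpos
  have hntd : (A + B).natTrailingDegree = m :=
    le_antisymm (natTrailingDegree_le_of_ne_zero hpos.ne')
      (le_natTrailingDegree hne hlow)
  have : (A + B).trailingCoeff = (A + B).coeff m := by rw [trailingCoeff, hntd]
  rw [this]
  exact hpos.le

/-- first nonzero Taylor coefficient of `p` at `c`: the sign of `p` just to the right of `c`. -/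
noncomputable def tcc (c : R) (p : R[X]) : R := (p.comp (X + C c)).trailingCoeff

theorem comp_translate_eq_zero_iff {c : R} {p : R[X]} : p.comp (X + C c) = 0 ↔ p = 0 := by
  constructor
  · intro h
    have hX : (X + C c).comp (X - C c) = X := by
      rw [add_comp, X_comp, C_comp, sub_add_cancel]
    have := congrArg (fun r : R[X] => r.comp (X - C c)) h
    simpa [comp_assoc, hX] using this
  · intro h; simp [h]

theorem tcc_eq_zero_iff {c : R} {p : R[X]} : tcc c p = 0 ↔ p = 0 := by
  rw [tcc, trailingCoeff_eq_zero, comp_translate_eq_zero_iff]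

theorem tcc_mul (c : R) (p q : R[X]) : tcc c (p * q) = tcc c p * tcc c q := by
  rw [tcc, mul_comp, trailingCoeff_mul]; rfl

theorem tcc_neg (c : R) (p : R[X]) : tcc c (-p) = -tcc c p := by
  rw [tcc, neg_comp, trailingCoeff_neg']; rfl

theorem tcc_add_nonneg {c : R} {A B : R[X]} (hA : 0 ≤ tcc c A) (hB : 0 ≤ tcc c B) :
    0 ≤ tcc c (A + B) := by
  rw [tcc, add_comp]
  exact trailing_add_nonneg hA hB

end TrailingOrdering


section PsetSection

open Polynomial

variable {R : Type*} [Field R] [LinearOrder R] [IsStrictOrderedRing R]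

/-- The ordering of `RatFunc R` in which `X` is infinitesimally larger than `c`. -/
noncomputable def Pset (c : R) : Set (RatFunc R) :=
  {f | ∃ p q : R[X], q ≠ 0 ∧ f = algebraMap _ _ p / algebraMap _ _ q ∧ 0 ≤ tcc c p * tcc c q}

theorem cross_mul {p₁ q₁ p₂ q₂ : R[X]} (hq₁ : q₁ ≠ 0) (hq₂ : q₂ ≠ 0)
    (h : (algebraMap R[X] (RatFunc R) p₁) / algebraMap _ _ q₁ =
      (algebraMap R[X] (RatFunc R) p₂) / algebraMap _ _ q₂) : p₁ * q₂ = p₂ * q₁ := by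
  apply RatFunc.algebraMap_injective
  rw [map_mul, map_mul]
  exact (div_eq_div_iff (RatFunc.algebraMap_ne_zero hq₁) (RatFunc.algebraMap_ne_zero hq₂)).mp h

theorem isOrdering_Pset (c : R) : IsOrdering (Pset c) := by
  refine ⟨?_, ?_, ?_, ?_⟩
  · rintro f ⟨p₁, q₁, hq₁, rfl, h₁⟩ g ⟨p₂, q₂, hq₂, rfl, h₂⟩
    refine ⟨p₁ * q₁ * (q₂ * q₂) + p₂ * q₂ * (q₁ * q₁), (q₁ * q₂) * (q₁ * q₂),
      by simp [hq₁, hq₂], ?_, ?_⟩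
    · have e₁ : algebraMap R[X] (RatFunc R) q₁ ≠ 0 := RatFunc.algebraMap_ne_zero hq₁
      have e₂ : algebraMap R[X] (RatFunc R) q₂ ≠ 0 := RatFunc.algebraMap_ne_zero hq₂
      simp only [map_add, map_mul]
      field_simp
    · have hA : 0 ≤ tcc c (p₁ * q₁ * (q₂ * q₂)) := by
        simp only [tcc_mul]
        exact mul_nonneg h₁ (mul_self_nonneg _)
      have hB : 0 ≤ tcc c (p₂ * q₂ * (q₁ * q₁)) := by
        simp only [tcc_mul]
        exact mul_nonneg h₂ (mul_self_nonneg _)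
      have hq : 0 ≤ tcc c ((q₁ * q₂) * (q₁ * q₂)) := by
        rw [tcc_mul]; exact mul_self_nonneg _
      exact mul_nonneg (tcc_add_nonneg hA hB) hq
  · rintro f ⟨p₁, q₁, hq₁, rfl, h₁⟩ g ⟨p₂, q₂, hq₂, rfl, h₂⟩
    refine ⟨p₁ * p₂, q₁ * q₂, by simp [hq₁, hq₂], ?_, ?_⟩
    · rw [map_mul, map_mul]
      rw [div_mul_div_comm]
    · calc (0:R) ≤ (tcc c p₁ * tcc c q₁) * (tcc c p₂ * tcc c q₂) := mul_nonneg h₁ h₂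
        _ = tcc c (p₁ * p₂) * tcc c (q₁ * q₂) := by rw [tcc_mul, tcc_mul]; ring
  · intro f
    rcases le_total 0 (tcc c f.num * tcc c f.denom) with h | h
    · exact Or.inl ⟨f.num, f.denom, f.denom_ne_zero, (f.num_div_denom).symm, h⟩
    · refine Or.inr ⟨-f.num, f.denom, f.denom_ne_zero, ?_, ?_⟩
      · rw [map_neg, neg_div, f.num_div_denom]
      · rw [tcc_neg]
        linarith
  · rintro f ⟨p₁, q₁, hq₁, hf₁, h₁⟩ ⟨p₂, q₂, hq₂, hf₂, h₂⟩
    have hcross : p₂ * q₁ = -p₁ * q₂ := by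
      apply cross_mul hq₂ hq₁
      rw [← hf₂, hf₁, map_neg, neg_div]
    have ht : tcc c p₂ * tcc c q₁ = -(tcc c p₁) * tcc c q₂ := by
      have := congrArg (tcc c) hcross
      rwa [tcc_mul, tcc_mul, tcc_neg] at this
    have hq₁t : tcc c q₁ ≠ 0 := fun h => hq₁ (tcc_eq_zero_iff.mp h)
    have hq₂t : tcc c q₂ ≠ 0 := fun h => hq₂ (tcc_eq_zero_iff.mp h)
    have key : tcc c p₁ * tcc c q₁ * (tcc c q₂ * tcc c q₂) = 0 := by
      have e : tcc c p₁ * tcc c q₁ * (tcc c q₂ * tcc c q₂) =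
          -(tcc c p₂ * tcc c q₂) * (tcc c q₁ * tcc c q₁) := by
        linear_combination (tcc c q₁ * tcc c q₂) * ht
      have hle : tcc c p₁ * tcc c q₁ * (tcc c q₂ * tcc c q₂) ≤ 0 := by
        rw [e]
        have := mul_nonneg h₂ (mul_self_nonneg (tcc c q₁))
        linarith
      have hge : 0 ≤ tcc c p₁ * tcc c q₁ * (tcc c q₂ * tcc c q₂) :=
        mul_nonneg h₁ (mul_self_nonneg _)
      linarith
    have hp₁ : p₁ = 0 := by
      rcases mul_eq_zero.mp key with h | h
      · rcases mul_eq_zero.mp h with h | h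
        · exact tcc_eq_zero_iff.mp h
        · exact absurd h hq₁t
      · rcases mul_eq_zero.mp h with h | h <;> exact absurd h hq₂t
    rw [hf₁, hp₁, map_zero, zero_div]

end PsetSection


section Infinitesimal

variable {R : Type*} [Field R] [LinearOrder R] [IsStrictOrderedRing R] (i : ℝ →+* R)

theorem iRR_nonneg {a : ℝ} (ha : 0 ≤ a) : 0 ≤ i a := by
  have h : i a = i (Real.sqrt a) * i (Real.sqrt a) := by
    rw [← map_mul, Real.mul_self_sqrt ha]
  rw [h]; exact mul_self_nonneg _

theorem iRR_strictMono : StrictMono i := by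
  intro a b hab
  have h1 : 0 ≤ i (b - a) := iRR_nonneg i (by linarith)
  have h2 : i (b - a) ≠ 0 := fun h => by
    have h3 : b - a = 0 := i.injective (by rw [h, map_zero])
    have : a = b := by linarith
    exact absurd this hab.ne
  have h4 : 0 < i b - i a := by
    rw [← map_sub]; exact lt_of_le_of_ne h1 (Ne.symm h2)
  linarith

theorem iRR_pos {a : ℝ} (ha : 0 < a) : 0 < i a := by
  have := iRR_strictMono i ha
  rwa [map_zero] at this

theorem exists_inf_of_big {x : R} (h : ∀ M : ℝ, 0 < M → i M < x * x) :
    ∃ ι : R, 0 < ι ∧ ∀ ε : ℝ, 0 < ε → ι < i ε := by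
  have hx2 : 0 < x * x := lt_trans (by rw [map_one]; exact one_pos : (0:R) < i 1) (h 1 one_pos)
  refine ⟨(x * x)⁻¹, inv_pos.mpr hx2, ?_⟩
  intro ε hε
  have hK : i (1 / ε) < x * x := h (1 / ε) (by positivity)
  have hiε : 0 < i ε := iRR_pos i hε
  have h2 : 1 < i ε * (x * x) := by
    calc (1:R) = i ε * i (1 / ε) := by rw [← map_mul, mul_one_div, div_self hε.ne', map_one]
      _ < i ε * (x * x) := by exact mul_lt_mul_of_pos_left hK hiε
  have h3 := mul_lt_mul_of_pos_left h2 (inv_pos.mpr hx2)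
  rw [mul_one] at h3
  calc (x * x)⁻¹ < (x * x)⁻¹ * (i ε * (x * x)) := h3
    _ = i ε := by rw [mul_comm, mul_assoc, mul_inv_cancel₀ hx2.ne', mul_one]
  
theorem exists_infinitesimal {x : R} (hx : ∀ r : ℝ, x ≠ i r) :
    ∃ ι : R, 0 < ι ∧ ∀ ε : ℝ, 0 < ε → ι < i ε := by
  classical
  set S := {a : ℝ | i a ≤ x} with hS
  have sq_big : ∀ (y : R) (M : ℝ), 0 < M → i M < y → i (M * M) < y * y := by
    intro y M hM hy
    have hiM : 0 < i M := iRR_pos i hM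
    rw [map_mul]
    nlinarith
  by_cases hne : S.Nonempty
  · by_cases hbdd : BddAbove S
    · set r := sSup S with hr
      have hxr : x - i r ≠ 0 := sub_ne_zero.mpr (hx r)
      refine ⟨(x - i r) * (x - i r), mul_self_pos.mpr hxr, ?_⟩
      intro ε hε
      set δ := Real.sqrt ε with hδdef
      have hδ : 0 < δ := Real.sqrt_pos.mpr hε
      have hub : x < i (r + δ) := by
        by_contra hcon
        push_neg at hcon
        have hmem : r + δ ∈ S := hcon
        have := le_csSup hbdd hmem
        linarith
      have hlb : i (r - δ) < x := by
        obtain ⟨a, haS, ha⟩ := exists_lt_of_lt_csSup hne (by linarith : r - δ < r)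
        calc i (r - δ) < i a := iRR_strictMono i (by linarith)
          _ ≤ x := haS
      have h1 : x - i r < i δ := by
        have := hub; rw [map_add] at this; linarith
      have h2 : -(i δ) < x - i r := by
        have := hlb; rw [map_sub] at this; linarith
      have hsq : (x - i r) * (x - i r) < i δ * i δ := by
        nlinarith [h1, h2]
      calc (x - i r) * (x - i r) < i δ * i δ := hsq
        _ = i ε := by rw [← map_mul, Real.mul_self_sqrt hε.le]
    · apply exists_inf_of_big i
      intro M hM
      set s := Real.sqrt M + 1 with hs
      have hs0 : 0 < s := by positivity
      obtain ⟨a, haS, haM⟩ := not_bddAbove_iff.mp hbdd s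
      have hix : i s < x := lt_of_lt_of_le (iRR_strictMono i haM) haS
      have := sq_big x s hs0 hix
      refine lt_trans (iRR_strictMono i ?_) this
      have hMs : Real.sqrt M * Real.sqrt M = M := Real.mul_self_sqrt hM.le
      nlinarith [Real.sqrt_nonneg M]
  · apply exists_inf_of_big i
    intro M hM
    set s := Real.sqrt M + 1 with hs
    have hs0 : 0 < s := by positivity
    have hix : x < i (-s) := by
      by_contra hcon
      push_neg at hcon
      exact hne ⟨-s, hcon⟩
    have hneg : i s < -x := by
      rw [map_neg] at hix; linarith
    have := sq_big (-x) s hs0 hneg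
    rw [neg_mul_neg] at this
    refine lt_trans (iRR_strictMono i ?_) this
    have hMs : Real.sqrt M * Real.sqrt M = M := Real.mul_self_sqrt hM.le
    nlinarith [Real.sqrt_nonneg M]

end Infinitesimal


section PlaceLemmas

variable {K : Type*} [Field K] [CharZero K]

theorem IsOrdering.rat_le_two {P : Set K} (h : IsOrdering P) {g : K}
    (hub : ((2 : ℚ) : K) - g ∈ P) {q : ℚ} (hq : g - (q : K) ∈ P) : q ≤ 2 := by
  by_contra hcon
  push_neg at hcon
  have h1 : ((2 - q : ℚ) : K) ∈ P := by
    have h0 := h.add_mem hq hub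
    have e : g - (q : K) + (((2 : ℚ) : K) - g) = ((2 - q : ℚ) : K) := by push_cast; ring
    rwa [e] at h0
  have h2 : -((2 - q : ℚ) : K) ∈ P := by
    have : ((q - 2 : ℚ) : K) ∈ P := h.ratCast_mem (by linarith)
    convert this using 1
    push_cast; ring
  have h3 := h.eq_zero h1 h2
  rw [Rat.cast_eq_zero] at h3
  linarith

theorem rPlace_half_lt_iff {P : Set K} (h : IsOrdering P) {g : K}
    (hub : ((2 : ℚ) : K) - g ∈ P) (hub2 : ((2 : ℚ) : K) + g ∈ P)
    (hlb : g - ((-1 : ℚ) : K) ∈ P) :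
    ((1/2 : ℝ) : WithTop ℝ) < rPlace P g ↔ ∃ q : ℚ, 1/2 < q ∧ g - (q : K) ∈ P := by
  have hmem : g ∈ orderValRing P := ⟨2, by norm_num, hub, hub2⟩
  rw [rPlace, if_pos hmem, WithTop.coe_lt_coe]
  have hne : Set.Nonempty {r : ℝ | ∃ q : ℚ, r = (q : ℝ) ∧ g - (q : K) ∈ P} :=
    ⟨((-1 : ℚ) : ℝ), -1, rfl, hlb⟩
  have hbdd : BddAbove {r : ℝ | ∃ q : ℚ, r = (q : ℝ) ∧ g - (q : K) ∈ P} := by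
    refine ⟨2, ?_⟩
    rintro r ⟨q, rfl, hq⟩
    have := h.rat_le_two hub hq
    exact_mod_cast this
  constructor
  · intro hlt
    obtain ⟨r, ⟨q, rfl, hqP⟩, hr⟩ := exists_lt_of_lt_csSup hne hlt
    refine ⟨q, ?_, hqP⟩
    have : ((1/2 : ℚ) : ℝ) < (q : ℝ) := by push_cast; exact hr
    exact_mod_cast this
  · rintro ⟨q, hq, hqP⟩
    refine lt_of_lt_of_le ?_ (le_csSup hbdd ⟨q, rfl, hqP⟩)
    have : ((1/2 : ℚ) : ℝ) < (q : ℝ) := by exact_mod_cast hq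
    push_cast at this
    exact this

theorem IsOrdering.one_sub_mem_of_sq {P : Set K} (h : IsOrdering P) {x : K}
    (hx : 1 - x * x ∈ P) : 1 - x ∈ P := by
  rcases h.total (1 - x) with hgood | hbad
  · exact hgood
  · rw [neg_sub] at hbad
    have hx1 : x + 1 ∈ P := by
      have h2 : ((2 : ℕ) : K) ∈ P := h.natCast_mem 2
      have := h.add_mem hbad h2
      convert this using 1
      push_cast; ring
    have hmul : x * x - 1 ∈ P := by
      have := h.mul_mem hbad hx1
      convert this using 1; ring
    have hneg : -(x * x - 1) ∈ P := by rwa [neg_sub]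
    have hzero : x * x - 1 = 0 := h.eq_zero hmul hneg
    have : (x - 1) * (x + 1) = 0 := by linear_combination hzero
    rcases mul_eq_zero.mp this with h1 | h1
    · have hx1' : x = 1 := by linear_combination h1
      rw [hx1', sub_self]
      exact h.zero_mem
    · have hx1' : x = -1 := by linear_combination h1
      rw [hx1'] at hbad
      have hmem2 : ((2 : ℕ) : K) ∈ P := h.natCast_mem 2
      have hmemneg : -((2 : ℕ) : K) ∈ P := by
        convert hbad using 1; push_cast; ring
      have := h.eq_zero hmem2 hmemneg
      simp at this
  
theorem IsOrdering.abs_le_one {P : Set K} (h : IsOrdering P) {x : K}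
    (hx : 1 - x * x ∈ P) : 1 - x ∈ P ∧ 1 + x ∈ P := by
  refine ⟨h.one_sub_mem_of_sq hx, ?_⟩
  have hx' : 1 - (-x) * (-x) ∈ P := by rwa [neg_mul_neg]
  have := h.one_sub_mem_of_sq hx'
  rwa [sub_neg_eq_add] at this

end PlaceLemmas


section Geometry

open Polynomial

variable {R : Type*} [Field R] [LinearOrder R] [IsStrictOrderedRing R]

instance inst_s13 : CharZero (RatFunc R) :=
  charZero_of_injective_algebraMap (algebraMap R (RatFunc R)).injective

/-- `(Y - c)/ι` in `RatFunc R`. -/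
noncomputable def hel (c ι : R) : RatFunc R :=
  (RatFunc.X - RatFunc.C c) * (RatFunc.C ι)⁻¹

/-- `1/(1 + ((Y - c)/ι)²)` in `RatFunc R`. -/
noncomputable def gel (c ι : R) : RatFunc R := (1 + hel c ι * hel c ι)⁻¹

theorem polyN_ne_zero (c ι : R) : Polynomial.C (ι * ι) + (X - Polynomial.C c) ^ 2 ≠ (0 : R[X]) := by
  intro hzero
  have hco : (Polynomial.C (ι * ι) + (X - Polynomial.C c) ^ 2).coeff 2 = 1 := by
    rw [coeff_add]
    have hmonic : ((X - Polynomial.C c) ^ 2 : R[X]).Monic := (monic_X_sub_C c).pow 2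
    have hdeg : ((X - Polynomial.C c) ^ 2 : R[X]).natDegree = 2 := by
      rw [natDegree_pow, natDegree_X_sub_C, mul_one]
    have : ((X - Polynomial.C c) ^ 2 : R[X]).coeff 2 = 1 := by
      have := hmonic.coeff_natDegree
      rwa [hdeg] at this
    rw [this, coeff_C]
    norm_num
  rw [hzero] at hco
  simp at hco

theorem hel_sq_eq (c ι : R) (hι : ι ≠ 0) :
    1 + hel c ι * hel c ι =
      algebraMap R[X] (RatFunc R) (Polynomial.C (ι * ι) + (X - Polynomial.C c) ^ 2) /
        algebraMap R[X] (RatFunc R) (Polynomial.C (ι * ι)) := by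
  have hCι : RatFunc.C ι ≠ 0 := fun h => hι ((_root_.map_eq_zero _).mp h)
  rw [map_add, map_pow, map_sub, RatFunc.algebraMap_X, RatFunc.algebraMap_C,
    RatFunc.algebraMap_C]
  rw [hel]
  rw [map_mul]
  field_simp

theorem one_add_hel_sq_ne_zero (c ι : R) (hι : ι ≠ 0) :
    (1 : RatFunc R) + hel c ι * hel c ι ≠ 0 := by
  rw [hel_sq_eq c ι hι]
  exact div_ne_zero (RatFunc.algebraMap_ne_zero (polyN_ne_zero c ι))
    (RatFunc.algebraMap_ne_zero (fun h => hι (by simpa [Polynomial.C_eq_zero, mul_self_eq_zero]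
      using h)))

variable {P : Set (RatFunc R)}

theorem gel_mem (hP : IsOrdering P) (c ι : R) : gel c ι ∈ P :=
  hP.inv_mem (hP.add_mem hP.one_mem (hP.sq_mem _))

theorem one_sub_gel_mem (hP : IsOrdering P) (c ι : R) (hι : ι ≠ 0) :
    1 - gel c ι ∈ P := by
  have hne := one_add_hel_sq_ne_zero c ι hι
  have e : 1 - gel c ι = (hel c ι * hel c ι) * (1 + hel c ι * hel c ι)⁻¹ := by
    rw [gel, eq_mul_inv_iff_mul_eq₀ hne, sub_mul, inv_mul_cancel₀ hne]
    ring
  rw [e]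
  exact hP.mul_mem (hP.sq_mem _) (hP.inv_mem (hP.add_mem hP.one_mem (hP.sq_mem _)))

theorem gel_bounds (hP : IsOrdering P) (c ι : R) (hι : ι ≠ 0) :
    ((2 : ℚ) : RatFunc R) - gel c ι ∈ P ∧ ((2 : ℚ) : RatFunc R) + gel c ι ∈ P ∧
      gel c ι - ((-1 : ℚ) : RatFunc R) ∈ P := by
  refine ⟨?_, ?_, ?_⟩
  · have := hP.add_mem hP.one_mem (one_sub_gel_mem hP c ι hι)
    convert this using 1
    push_cast; ring
  · have := hP.add_mem (hP.ratCast_mem (by norm_num : (0:ℚ) ≤ 2)) (gel_mem hP c ι)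
    convert this using 1
  · have := hP.add_mem (gel_mem hP c ι) hP.one_mem
    convert this using 1
    push_cast; ring

theorem hel_small (hP : IsOrdering P) {c ι : R} (hι : ι ≠ 0) {q : ℚ} (hq : 1/2 < q)
    (hmem : gel c ι - (q : RatFunc R) ∈ P) :
    1 - hel c ι ∈ P ∧ 1 + hel c ι ∈ P := by
  set h := hel c ι with hh
  have hne : (1 : RatFunc R) + h * h ≠ 0 := one_add_hel_sq_ne_zero c ι hι
  have hplus : (1 : RatFunc R) + h * h ∈ P := hP.add_mem hP.one_mem (hP.sq_mem _)
  have hA1 : (gel c ι - (q : RatFunc R)) * (1 + h * h) ∈ P := hP.mul_mem hmem hplus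
  have e1 : (gel c ι - (q : RatFunc R)) * (1 + h * h) =
      (1 - (q : RatFunc R)) - (q : RatFunc R) * (h * h) := by
    rw [gel, ← hh, sub_mul, inv_mul_cancel₀ hne]
    ring
  rw [e1] at hA1
  have hA2 : ((2 * q - 1 : ℚ) : RatFunc R) ∈ P := hP.ratCast_mem (by linarith)
  have hA3 : (q : RatFunc R) * (1 - h * h) ∈ P := by
    have := hP.add_mem hA1 hA2
    convert this using 1
    push_cast; ring
  have hA4 : ((q⁻¹ : ℚ) : RatFunc R) ∈ P := hP.ratCast_mem (by positivity)
  have hA5 : 1 - h * h ∈ P := by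
    have hq0 : (q : RatFunc R) ≠ 0 := by
      rw [Rat.cast_ne_zero]; intro h0; rw [h0] at hq; norm_num at hq
    have := hP.mul_mem hA4 hA3
    have e2 : ((q⁻¹ : ℚ) : RatFunc R) * ((q : RatFunc R) * (1 - h * h)) = 1 - h * h := by
      push_cast
      field_simp
    rwa [e2] at this
  exact hP.abs_le_one hA5

theorem hel_sub_hel (s' t' ι : R) (hι : ι ≠ 0) :
    hel t' ι - hel s' ι = RatFunc.C ((s' - t') / ι) := by
  have hCι : RatFunc.C ι ≠ 0 := fun h => hι ((_root_.map_eq_zero _).mp h)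
  rw [hel, hel, map_div₀, map_sub]
  field_simp
  ring

end Geometry


section MorePset

open Polynomial

variable {R : Type*} [Field R] [LinearOrder R] [IsStrictOrderedRing R]

theorem trailingCoeff_of_coeff_zero_ne {p : R[X]} (h : p.coeff 0 ≠ 0) :
    p.trailingCoeff = p.coeff 0 := by
  have hntd : p.natTrailingDegree = 0 := natTrailingDegree_eq_zero.mpr (Or.inr h)
  rw [trailingCoeff, hntd]

theorem gel_sub_mem_Pset {c ι : R} (hι : 0 < ι) :
    gel c ι - ((3/4 : ℚ) : RatFunc R) ∈ Pset c := by
  set p : R[X] := Polynomial.C (ι * ι) - Polynomial.C 3 * (X - Polynomial.C c) ^ 2 with hp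
  set q : R[X] := Polynomial.C 4 * (Polynomial.C (ι * ι) + (X - Polynomial.C c) ^ 2) with hq
  have hq0 : q ≠ 0 := mul_ne_zero (fun h => by
      have : (4 : R) = 0 := Polynomial.C_eq_zero.mp h
      norm_num at this) (polyN_ne_zero c ι)
  refine ⟨p, q, hq0, ?_, ?_⟩
  · have hCι : RatFunc.C ι ≠ 0 := fun h => hι.ne' ((_root_.map_eq_zero _).mp h)
    have hN : RatFunc.C ι * RatFunc.C ι + (RatFunc.X - RatFunc.C c) ^ 2 ≠ 0 := by
      simpa only [map_add, map_pow, map_sub, map_mul, RatFunc.algebraMap_X,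
        RatFunc.algebraMap_C] using RatFunc.algebraMap_ne_zero (polyN_ne_zero c ι)
    have key : ∀ Z bv : RatFunc R, bv ≠ 0 → bv * bv + Z ^ 2 ≠ 0 →
        (1 + Z * bv⁻¹ * (Z * bv⁻¹))⁻¹ - ((3/4 : ℚ) : RatFunc R) =
          (bv * bv - 3 * Z ^ 2) / (4 * (bv * bv + Z ^ 2)) := by
      intro Z bv hbv hden
      have e1 : 1 + Z * bv⁻¹ * (Z * bv⁻¹) = (bv * bv + Z ^ 2) / (bv * bv) := by
        field_simp
      rw [e1, inv_div]
      push_cast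
      have hden' : bv ^ 2 + Z ^ 2 ≠ 0 := by rwa [pow_two]
      field_simp
      ring
    rw [hp, hq]
    simp only [map_sub, map_add, map_mul, map_pow, RatFunc.algebraMap_C, RatFunc.algebraMap_X,
      map_ofNat]
    rw [gel, hel]
    exact key _ _ hCι hN
  · have h2 : ((X - Polynomial.C c) ^ 2 : R[X]).comp (X + Polynomial.C c) = X ^ 2 := by
      rw [pow_comp, sub_comp, X_comp, C_comp, add_sub_cancel_right]
    have htp : tcc c p = ι * ι := by
      rw [tcc, hp, sub_comp, C_comp, mul_comp, C_comp, h2]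
      have hco : (Polynomial.C (ι * ι) - Polynomial.C 3 * X ^ 2 : R[X]).coeff 0 = ι * ι := by
        rw [coeff_sub, coeff_C, coeff_C_mul, coeff_X_pow]
        norm_num
      rw [trailingCoeff_of_coeff_zero_ne (by rw [hco]; positivity), hco]
    have htq : tcc c q = 4 * (ι * ι) := by
      rw [tcc, hq, mul_comp, C_comp, add_comp, C_comp, h2]
      have hco : (Polynomial.C 4 * (Polynomial.C (ι * ι) + X ^ 2) : R[X]).coeff 0
          = 4 * (ι * ι) := by
        rw [coeff_C_mul, coeff_add, coeff_C, coeff_X_pow]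
        norm_num
      rw [trailingCoeff_of_coeff_zero_ne (by rw [hco]; positivity), hco]
    rw [htp, htq]
    positivity

end MorePset


section DisjointCore

variable {R : Type*} [Field R] [LinearOrder R] [IsStrictOrderedRing R]

theorem disjoint_core (i : ℝ →+* R) {ι : R} (hι0 : 0 < ι)
    (hinf : ∀ ε : ℝ, 0 < ε → ι < i ε)
    (hsqR : ∀ a : R, 0 ≤ a → ∃ b : R, b * b = a)
    {P : Set (RatFunc R)} (hP : IsOrdering P) {s t : ℝ} (hst : s ≠ t)
    {q₁ q₂ : ℚ} (hq₁ : 1/2 < q₁) (hq₂ : 1/2 < q₂)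
    (m₁ : gel (i t) ι - (q₁ : RatFunc R) ∈ P)
    (m₂ : gel (i s) ι - (q₂ : RatFunc R) ∈ P) : False := by
  have hCmem : ∀ a : R, 0 ≤ a → RatFunc.C a ∈ P := by
    intro a ha
    obtain ⟨b, hb⟩ := hsqR a ha
    rw [← hb, map_mul]
    exact hP.sq_mem _
  have bt := hel_small hP hι0.ne' hq₁ m₁
  have bs := hel_small hP hι0.ne' hq₂ m₂
  set u : R := (i s - i t) / ι with hu
  have hdiff : hel (i t) ι - hel (i s) ι = RatFunc.C u := hel_sub_hel (i s) (i t) ι hι0.ne'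
  have d1 : 2 - RatFunc.C u ∈ P := by
    have := hP.add_mem bt.1 bs.2
    convert this using 1
    rw [← hdiff]; ring
  have d2 : 2 + RatFunc.C u ∈ P := by
    have := hP.add_mem bt.2 bs.1
    convert this using 1
    rw [← hdiff]; ring
  have hC2 : RatFunc.C (2 : R) = (2 : RatFunc R) := map_ofNat _ 2
  rcases hst.lt_or_gt with hlt | hlt
  · -- s < t, so u < -3
    have h3ι : 3 * ι < i t - i s := by
      have h0 := hinf ((t - s) / 3) (by linarith)
      have he : i ((t - s) / 3) = (i t - i s) / 3 := by
        rw [map_div₀, map_sub, map_ofNat]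
      rw [he] at h0
      linarith
    have hu3 : u < -3 := by
      rw [hu, div_lt_iff₀ hι0]
      linarith
    have hmem : RatFunc.C (-u - 2) ∈ P := hCmem _ (by linarith)
    have hmem' : -(2 + RatFunc.C u) ∈ P := by
      rw [map_sub, map_neg, hC2] at hmem
      convert hmem using 1
      ring
    have hz := hP.eq_zero d2 hmem'
    have hz2 : RatFunc.C (u + 2) = 0 := by
      rw [map_add, hC2]
      linear_combination hz
    have hu2 : u + 2 = 0 := (_root_.map_eq_zero _).mp hz2
    linarith
  · -- t < s, so 3 < u
    have h3ι : 3 * ι < i s - i t := by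
      have h0 := hinf ((s - t) / 3) (by linarith)
      have he : i ((s - t) / 3) = (i s - i t) / 3 := by
        rw [map_div₀, map_sub, map_ofNat]
      rw [he] at h0
      linarith
    have hu3 : 3 < u := by
      rw [hu, lt_div_iff₀ hι0]
      linarith
    have hmem : RatFunc.C (u - 2) ∈ P := hCmem _ (by linarith)
    have hmem' : -(2 - RatFunc.C u) ∈ P := by
      rw [map_sub, hC2] at hmem
      convert hmem using 1
      ring
    have hz := hP.eq_zero d1 hmem'
    have hz2 : RatFunc.C (2 - u) = 0 := by
      rw [map_sub, hC2]
      linear_combination hz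
    have hu2 : 2 - u = 0 := (_root_.map_eq_zero _).mp hz2
    linarith

end DisjointCore


theorem lambdaMap_surjective (K : Type*) [Field K] : Function.Surjective (lambdaMap K) := by
  rintro ⟨φ, P, hP, rfl⟩
  exact ⟨⟨P, hP⟩, rfl⟩

instance (K : Type*) [Field K] : CompactSpace (PlaceSpace K) := by
  rw [← isCompact_univ_iff, ← Set.range_eq_univ.mpr (lambdaMap_surjective K)]
  exact isCompact_range continuous_coinduced_rng


/-- STATEMENT 18: if `R` is a real closure of the rational function field `ℝ(X)`
(a real closed field containing `ℝ` and an element `x` transcendental over `ℝ`, with `R`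
algebraic over `ℝ(x)`), then the space `M(R(Y))` of ℝ-places of `R(Y)`, with the quotient
topology induced from the Harrison topology, is not metrizable. -/
theorem placeSpace_realClosure_not_metrizable
    {R : Type*} [Field R] [LinearOrder R] [IsStrictOrderedRing R]
    -- R is real closed:
    (hsq : ∀ a : R, 0 ≤ a → ∃ b : R, b * b = a)
    (hodd : ∀ p : Polynomial R, Odd p.natDegree → ∃ y : R, p.eval y = 0)
    -- R contains ℝ and an element x transcendental over ℝ:
    (i : ℝ →+* R) (x : R)
    (htrans : ∀ p : Polynomial ℝ, Polynomial.eval₂ i x p = 0 → p = 0)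
    -- R is algebraic over the subfield ℝ(x) (equivalently, over the subring ℝ[x]):
    (halg : ∀ r : R, ∃ p : Polynomial R, p ≠ 0 ∧
      (∀ n : ℕ, p.coeff n ∈ Subring.closure (Set.range i ∪ {x})) ∧
      Polynomial.eval r p = 0) :
    ¬ TopologicalSpace.MetrizableSpace (PlaceSpace (RatFunc R)) := by
  intro hmet
  -- `x` realizes no real number, so `R` contains a positive infinitesimal over `ℝ`.
  have hxr : ∀ r : ℝ, x ≠ i r := by
    intro r hx
    have h0 : Polynomial.eval₂ i x (Polynomial.X - Polynomial.C r) = 0 := by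
      rw [Polynomial.eval₂_sub, Polynomial.eval₂_X, Polynomial.eval₂_C, hx, sub_self]
    exact Polynomial.X_sub_C_ne_zero r (htrans _ h0)
  obtain ⟨ι, hι0, hinf⟩ := exists_infinitesimal i hxr
  -- the family of pairwise disjoint nonempty open subsets of the place space
  set g : ℝ → RatFunc R := fun t => gel (i t) ι with hgdef
  set U : ℝ → Set (PlaceSpace (RatFunc R)) :=
    fun t => {φ | ((1/2 : ℝ) : WithTop ℝ) < φ.1 (g t)} with hUdef
  have hKey : ∀ (t : ℝ) (P : Set (RatFunc R)), IsOrdering P →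
      (((1/2 : ℝ) : WithTop ℝ) < rPlace P (g t) ↔
        ∃ q : ℚ, 1/2 < q ∧ g t - (q : RatFunc R) ∈ P) := by
    intro t P hP
    obtain ⟨hb1, hb2, hb3⟩ := gel_bounds hP (i t) ι hι0.ne'
    exact rPlace_half_lt_iff hP hb1 hb2 hb3
  have hOpen : ∀ t, IsOpen (U t) := by
    intro t
    rw [isOpen_coinduced]
    have he : (lambdaMap (RatFunc R)) ⁻¹' (U t) =
        ⋃ (q : ℚ), ⋃ (_ : (1/2 : ℚ) < q),
          {P : OrderSpace (RatFunc R) | g t - (q : RatFunc R) ∈ P.1} := by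
      ext P
      simp only [Set.mem_preimage, Set.mem_iUnion, Set.mem_setOf_eq, hUdef, exists_prop]
      exact (hKey t P.1 P.2)
    rw [he]
    exact isOpen_iUnion fun q => isOpen_iUnion fun _ => isOpen_orderSpace_mem _
  have hNe : ∀ t, (U t).Nonempty := by
    intro t
    refine ⟨lambdaMap _ ⟨Pset (i t), isOrdering_Pset (i t)⟩, ?_⟩
    show ((1/2 : ℝ) : WithTop ℝ) < rPlace (Pset (i t)) (g t)
    rw [hKey t _ (isOrdering_Pset (i t))]
    exact ⟨3/4, by norm_num, gel_sub_mem_Pset hι0⟩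
  have hDisj : ∀ s t : ℝ, s ≠ t → U s ∩ U t = ∅ := by
    intro s t hst
    ext φ
    simp only [Set.mem_inter_iff, Set.mem_empty_iff_false, iff_false, not_and]
    intro hs ht
    obtain ⟨P, hP, hφ⟩ := φ.2
    simp only [hUdef, Set.mem_setOf_eq, hφ] at hs ht
    obtain ⟨q₂, hq₂, m₂⟩ := (hKey s P hP).mp hs
    obtain ⟨q₁, hq₁, m₁⟩ := (hKey t P hP).mp ht
    exact disjoint_core i hι0 hinf hsq hP hst hq₁ hq₂ m₁ m₂
  -- a compact metrizable space is separable
  letI := TopologicalSpace.metrizableSpaceMetric (PlaceSpace (RatFunc R))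
  obtain ⟨D, hDc, hDd⟩ := TopologicalSpace.exists_countable_dense (PlaceSpace (RatFunc R))
  have hpick : ∀ t : ℝ, ∃ φ, φ ∈ D ∩ U t := fun t =>
    ((hDd.inter_open_nonempty (U t) (hOpen t) (hNe t)).imp fun φ hφ => ⟨hφ.2, hφ.1⟩)
  choose z hz using hpick
  have hinj : Function.Injective z := by
    intro a b hab
    by_contra hne
    have h1 : z a ∈ U a := (hz a).2
    have h2 : z a ∈ U b := hab ▸ (hz b).2
    have h3 := hDisj a b hne
    exact absurd (Set.mem_inter h1 h2) (by rw [h3]; exact Set.notMem_empty _)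
  have hcount : (Set.range z).Countable := hDc.mono (by rintro _ ⟨t, rfl⟩; exact (hz t).1)
  have : Countable ℝ := by
    haveI := hcount.to_subtype
    exact Countable.of_equiv _ (Equiv.ofInjective z hinj).symm
  exact Cardinal.not_countable_real Set.countable_univ
end
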